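/- arXiv:2009.01425 — 5 statements merged into one kernel-verified Lean document; each statement's English description precedes it below -/
import Mathlib

section
/- Assume b₀ + b₁ ≥ 1 and 1 ≤ A₀ < A₁, and let μ be the ghost measure of f. Set Λ = log(2A₁/(A₀+A₁)) / log(A₁/A₀), and let ℜ_Λ ⊆ [0,1) be the set of all x whose binary expansion has lower density of zeroes, liminf_{i→∞} (#{1 ≤ j ≤ i : d_j(x) = 0})/i, strictly greater than Λ. Then μ(ℜ_Λ) = 0, i.e. μ is concentrated on the complement of ℜ_Λ. -/
open MeasureTheory Filter Topology

/-- The `N`-th approximant to the ghost measure of `f`: the normalised Dirac comb built from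
the values of `f` on the fundamental region `[2^N, 2^(N+1))`. -/
noncomputable def ghostApprox (f : ℕ → ℕ) (N : ℕ) : Measure ℝ :=
  (∑ n ∈ Finset.range (2 ^ N), (f (2 ^ N + n) : ENNReal))⁻¹ •
    ∑ n ∈ Finset.range (2 ^ N), (f (2 ^ N + n) : ENNReal) • Measure.dirac ((n : ℝ) / 2 ^ N)

/-- Weak (vague) convergence of a sequence of finite measures on `ℝ`. -/
def WeakLimit (μs : ℕ → Measure ℝ) (μ : Measure ℝ) : Prop :=
  ∀ g : BoundedContinuousFunction ℝ ℝ,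
    Tendsto (fun N => ∫ x, g x ∂(μs N)) atTop (𝓝 (∫ x, g x ∂μ))

namespace Stmt13

set_option linter.unusedSectionVars false
set_option maxHeartbeats 1000000


def zc (k N : ℕ) : ℕ := ∑ j ∈ Finset.range N, if k / 2^j % 2 = 0 then 1 else 0

lemma zc_le (k N : ℕ) : zc k N ≤ N := by
  calc zc k N ≤ ∑ _j ∈ Finset.range N, 1 := Finset.sum_le_sum (by intro i _; split <;> omega)
  _ = N := by simp

lemma zc_even (m N : ℕ) : zc (2*m) (N+1) = zc m N + 1 := by
  rw [zc, Finset.sum_range_succ']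
  have h0 : (2*m) / 2^0 % 2 = 0 := by omega
  rw [if_pos h0]
  congr 1
  apply Finset.sum_congr rfl
  intro i _
  congr 2
  rw [pow_succ, mul_comm (2^i) 2, ← Nat.div_div_eq_div_mul, Nat.mul_div_cancel_left _ two_pos]

lemma zc_odd (m N : ℕ) : zc (2*m+1) (N+1) = zc m N := by
  rw [zc, Finset.sum_range_succ']
  have h0 : ¬ ((2*m+1) / 2^0 % 2 = 0) := by omega
  rw [if_neg h0, add_zero]
  apply Finset.sum_congr rfl
  intro i _
  congr 2
  rw [pow_succ, mul_comm (2^i) 2, ← Nat.div_div_eq_div_mul]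
  have : (2*m+1)/2 = m := by omega
  rw [this]

section
variable {A₀ A₁ b₀ b₁ : ℕ} {f : ℕ → ℕ}
variable (hf1 : 1 ≤ f 1)
  (heven : ∀ n, 1 ≤ n → f (2 * n) = A₀ * f n + b₀)
  (hodd : ∀ n, 1 ≤ n → f (2 * n + 1) = A₁ * f n + b₁)
  (hA0 : 1 ≤ A₀) (hlt : A₀ < A₁)

include heven hodd in
lemma f_pair (n : ℕ) (hn : 1 ≤ n) :
    f (2*n) + f (2*n+1) = (A₀+A₁) * f n + (b₀+b₁) := by
  rw [heven n hn, hodd n hn]; ring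

include heven hodd hA0 hlt in
lemma f_ub : ∀ N, ∀ k < 2^N,
    f (2^N + k) ≤ A₀ ^ zc k N * A₁ ^ (N - zc k N) * (f 1 + (b₀+b₁) * N) := by
  intro N
  induction N with
  | zero => intro k hk; interval_cases k; simp [zc]
  | succ N ih =>
    intro k hk
    have hA1 : 1 ≤ A₁ := le_of_lt (lt_of_le_of_lt hA0 hlt)
    have hone : (1:ℕ) ≤ 2^N := Nat.one_le_two_pow
    rcases Nat.even_or_odd k with ⟨m, hm⟩ | ⟨m, hm⟩
    · subst hm
      have hm2 : m < 2^N := by rw [pow_succ] at hk; omega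
      have key : f (2^(N+1) + (m+m)) = A₀ * f (2^N + m) + b₀ := by
        have h2 : 2^(N+1) + (m+m) = 2 * (2^N + m) := by ring
        rw [h2, heven _ (by omega)]
      rw [key]
      have hz : zc (m+m) (N+1) = zc m N + 1 := by
        have := zc_even m N; rwa [two_mul] at this
      rw [hz]
      have hzle := zc_le m N
      have hsub : N + 1 - (zc m N + 1) = N - zc m N := by omega
      rw [hsub]
      have hpos : 0 < A₀ * (A₀ ^ zc m N * A₁ ^ (N - zc m N)) := by
        have h1 : 0 < A₀ ^ zc m N := Nat.pow_pos hA0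
        have h2 : 0 < A₁ ^ (N - zc m N) := Nat.pow_pos hA1
        positivity
      have heq : A₀ ^ (zc m N + 1) * A₁ ^ (N - zc m N)
          = A₀ * (A₀ ^ zc m N * A₁ ^ (N - zc m N)) := by ring
      rw [heq]
      have hb : b₀ + b₁ ≤ A₀ * (A₀ ^ zc m N * A₁ ^ (N - zc m N)) * (b₀+b₁) := Nat.le_mul_of_pos_left _ hpos
      have hih := ih m hm2
      calc A₀ * f (2^N + m) + b₀
          ≤ A₀ * ((A₀ ^ zc m N * A₁ ^ (N - zc m N) * (f 1 + (b₀+b₁) * N))) + (b₀+b₁) := by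
            have := Nat.mul_le_mul_left A₀ hih; omega
        _ ≤ A₀ * ((A₀ ^ zc m N * A₁ ^ (N - zc m N) * (f 1 + (b₀+b₁) * N))) + A₀ * (A₀ ^ zc m N * A₁ ^ (N - zc m N)) * (b₀+b₁) := by omega
        _ = A₀ * (A₀ ^ zc m N * A₁ ^ (N - zc m N)) * (f 1 + (b₀+b₁) * (N+1)) := by ring
    · subst hm
      have hm2 : m < 2^N := by rw [pow_succ] at hk; omega
      have key : f (2^(N+1) + (2*m+1)) = A₁ * f (2^N + m) + b₁ := by
        have h2 : 2^(N+1) + (2*m+1) = 2 * (2^N + m) + 1 := by ring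
        rw [h2, hodd _ (by omega)]
      rw [key, zc_odd m N]
      have hzle := zc_le m N
      have hsub : N + 1 - zc m N = (N - zc m N) + 1 := by omega
      rw [hsub]
      have hpos : 0 < A₁ * (A₀ ^ zc m N * A₁ ^ (N - zc m N)) := by
        have h1 : 0 < A₀ ^ zc m N := Nat.pow_pos hA0
        have h2 : 0 < A₁ ^ (N - zc m N) := Nat.pow_pos hA1
        positivity
      have heq : A₀ ^ zc m N * A₁ ^ ((N - zc m N) + 1)
          = A₁ * (A₀ ^ zc m N * A₁ ^ (N - zc m N)) := by ring
      rw [heq]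
      have hb : b₀ + b₁ ≤ A₁ * (A₀ ^ zc m N * A₁ ^ (N - zc m N)) * (b₀+b₁) := Nat.le_mul_of_pos_left _ hpos
      have hih := ih m hm2
      calc A₁ * f (2^N + m) + b₁
          ≤ A₁ * ((A₀ ^ zc m N * A₁ ^ (N - zc m N) * (f 1 + (b₀+b₁) * N))) + (b₀+b₁) := by
            have := Nat.mul_le_mul_left A₁ hih; omega
        _ ≤ A₁ * ((A₀ ^ zc m N * A₁ ^ (N - zc m N) * (f 1 + (b₀+b₁) * N))) + A₁ * (A₀ ^ zc m N * A₁ ^ (N - zc m N)) * (b₀+b₁) := by omega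
        _ = A₁ * (A₀ ^ zc m N * A₁ ^ (N - zc m N)) * (f 1 + (b₀+b₁) * (N+1)) := by ring

end

lemma sum_range_two_mul {M : Type*} [AddCommMonoid M] (g : ℕ → M) (m : ℕ) :
    ∑ n ∈ Finset.range (2*m), g n = ∑ n ∈ Finset.range m, (g (2*n) + g (2*n+1)) := by
  induction m with
  | zero => simp
  | succ m ih =>
    have h : 2*(m+1) = (2*m)+1+1 := by ring
    rw [h, Finset.sum_range_succ, Finset.sum_range_succ, ih, Finset.sum_range_succ, add_assoc]

section
variable {A₀ A₁ b₀ b₁ : ℕ} {f : ℕ → ℕ}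
variable (hf1 : 1 ≤ f 1)
  (heven : ∀ n, 1 ≤ n → f (2 * n) = A₀ * f n + b₀)
  (hodd : ∀ n, 1 ≤ n → f (2 * n + 1) = A₁ * f n + b₁)
  (hA0 : 1 ≤ A₀) (hlt : A₀ < A₁)

/-- weighted sum over level `N+L` of values whose level-`N` prefix lies in `W` -/
def SB (f : ℕ → ℕ) (N : ℕ) (W : Finset ℕ) (L : ℕ) : ℕ :=
  ∑ n ∈ Finset.range (2^(N+L)), if n / 2^L ∈ W then f (2^(N+L) + n) else 0

include heven hodd hA0 hlt in
lemma SB_succ (N : ℕ) (W : Finset ℕ) (L : ℕ) :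
    SB f N W (L+1) ≤ (A₀+A₁) * SB f N W L + (b₀+b₁) * 2^(N+L) := by
  have h2 : 2^(N+(L+1)) = 2 * 2^(N+L) := by rw [← pow_succ']; ring_nf
  rw [SB, h2, sum_range_two_mul]
  have key : ∀ n ∈ Finset.range (2^(N+L)),
      ((if (2*n) / 2^(L+1) ∈ W then f (2*2^(N+L) + 2*n) else 0)
        + (if (2*n+1) / 2^(L+1) ∈ W then f (2*2^(N+L) + (2*n+1)) else 0))
      ≤ (A₀+A₁) * (if n / 2^L ∈ W then f (2^(N+L) + n) else 0) + (b₀+b₁) := by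
    intro n _
    have e1 : (2*n) / 2^(L+1) = n / 2^L := by
      rw [pow_succ', Nat.mul_div_mul_left _ _ two_pos]
    have e2 : (2*n+1) / 2^(L+1) = n / 2^L := by
      rw [pow_succ', ← Nat.div_div_eq_div_mul]
      congr 1; omega
    rw [e1, e2]
    by_cases hw : n / 2^L ∈ W
    · rw [if_pos hw, if_pos hw, if_pos hw]
      have ha : 2*2^(N+L) + 2*n = 2 * (2^(N+L) + n) := by ring
      have hb : 2*2^(N+L) + (2*n+1) = 2 * (2^(N+L) + n) + 1 := by ring
      have hpos : 1 ≤ 2^(N+L) + n := le_add_right Nat.one_le_two_pow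
      rw [ha, hb, heven _ hpos, hodd _ hpos]
      ring_nf
      omega
    · simp [hw]
  calc ∑ n ∈ Finset.range (2^(N+L)), ((if (2*n) / 2^(L+1) ∈ W then f (2*2^(N+L) + 2*n) else 0)
        + (if (2*n+1) / 2^(L+1) ∈ W then f (2*2^(N+L) + (2*n+1)) else 0))
      ≤ ∑ n ∈ Finset.range (2^(N+L)),
          ((A₀+A₁) * (if n / 2^L ∈ W then f (2^(N+L) + n) else 0) + (b₀+b₁)) :=
        Finset.sum_le_sum key
    _ = (A₀+A₁) * SB f N W L + (b₀+b₁) * 2^(N+L) := by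
        rw [Finset.sum_add_distrib, ← Finset.mul_sum, Finset.sum_const, Finset.card_range, SB]
        ring

include heven hodd hA0 hlt in
lemma SB_le (N : ℕ) (W : Finset ℕ) : ∀ L,
    SB f N W L + (b₀+b₁) * 2^(N+L) ≤ (A₀+A₁)^L * (SB f N W 0 + (b₀+b₁) * 2^N) := by
  intro L
  induction L with
  | zero => simp
  | succ L ih =>
    have hs3 : 3 ≤ A₀ + A₁ := by omega
    have h1 := SB_succ heven hodd hA0 hlt (f := f) N W L
    calc SB f N W (L+1) + (b₀+b₁) * 2^(N+(L+1))
        ≤ (A₀+A₁) * SB f N W L + (b₀+b₁) * 2^(N+L) + (b₀+b₁) * 2^(N+(L+1)) := by omega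
      _ ≤ (A₀+A₁) * (SB f N W L + (b₀+b₁) * 2^(N+L)) := by
          have h2 : 2^(N+(L+1)) = 2 * 2^(N+L) := by rw [← pow_succ']; ring_nf
          rw [h2]; nlinarith [Nat.mul_le_mul_right ((b₀+b₁) * 2^(N+L)) hs3]
      _ ≤ (A₀+A₁) * ((A₀+A₁)^L * (SB f N W 0 + (b₀+b₁) * 2^N)) := Nat.mul_le_mul_left _ ih
      _ = (A₀+A₁)^(L+1) * (SB f N W 0 + (b₀+b₁) * 2^N) := by ring

lemma SB_zero (N : ℕ) (W : Finset ℕ) :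
    SB f N W 0 = ∑ k ∈ (Finset.range (2^N)).filter (· ∈ W), f (2^N + k) := by
  rw [SB, Finset.sum_filter]
  simp

/-- the total sum over level `N` -/
def Sig (f : ℕ → ℕ) (N : ℕ) : ℕ := ∑ n ∈ Finset.range (2^N), f (2^N + n)

include hf1 heven hodd hA0 hlt in
lemma Sig_lb : ∀ N, (A₀+A₁)^N ≤ Sig f N := by
  intro N
  induction N with
  | zero => simpa [Sig]
  | succ N ih =>
    have key : (A₀+A₁) * Sig f N ≤ Sig f (N+1) := by
      rw [Sig, Sig]
      have h2 : 2^(N+1) = 2 * 2^N := by rw [pow_succ']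
      rw [h2, sum_range_two_mul, Finset.mul_sum]
      apply Finset.sum_le_sum
      intro n _
      have ha : 2*2^N + 2*n = 2 * (2^N + n) := by ring
      have hb : 2*2^N + (2*n+1) = 2 * (2^N + n) + 1 := by ring
      have hpos : 1 ≤ 2^N + n := le_add_right Nat.one_le_two_pow
      rw [ha, hb, heven _ hpos, hodd _ hpos]
      ring_nf
      omega
    calc (A₀+A₁)^(N+1) = (A₀+A₁) * (A₀+A₁)^N := by ring
      _ ≤ (A₀+A₁) * Sig f N := Nat.mul_le_mul_left _ ih
      _ ≤ Sig f (N+1) := key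

end


open scoped Classical in
lemma ghost_apply (f : ℕ → ℕ) (N : ℕ) (U : Set ℝ) (hU : MeasurableSet U) :
    ghostApprox f N U
      = ((Sig f N : ENNReal))⁻¹ *
        ∑ n ∈ (Finset.range (2^N)).filter (fun n : ℕ => (n:ℝ)/2^N ∈ U), (f (2^N+n) : ENNReal) := by
  classical
  rw [ghostApprox, Measure.smul_apply, smul_eq_mul]
  congr 1
  · rw [Sig, Nat.cast_sum]
  · rw [Measure.finset_sum_apply]
    rw [Finset.sum_filter]
    apply Finset.sum_congr rfl
    intro n _
    rw [Measure.smul_apply, smul_eq_mul, Measure.dirac_apply' _ hU]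
    by_cases h : (n:ℝ)/2^N ∈ U
    · rw [if_pos h, Set.indicator_of_mem h]; simp
    · rw [if_neg h, Set.indicator_of_notMem h]; simp

open scoped Classical in
lemma ghost_isProb (f : ℕ → ℕ) (N : ℕ) (hpos : 0 < Sig f N) :
    IsProbabilityMeasure (ghostApprox f N) := by
  constructor
  rw [ghost_apply f N Set.univ MeasurableSet.univ]
  rw [Finset.sum_filter]
  simp only [Set.mem_univ, if_true]
  have hcast : ∑ n ∈ Finset.range (2^N), (f (2^N+n) : ENNReal) = ((Sig f N : ℕ) : ENNReal) := by
    rw [Sig, Nat.cast_sum]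
  rw [hcast]
  refine ENNReal.inv_mul_cancel ?_ (by simp)
  simp only [ne_eq, Nat.cast_eq_zero]
  omega



lemma floor_pow_div (x : ℝ) (j N : ℕ) (hj : j ≤ N) (k : ℕ)
    (h1 : (k:ℝ) ≤ (2:ℝ)^N * x) (h2 : (2:ℝ)^N * x < (k:ℝ)+1) :
    ⌊(2:ℝ)^j * x⌋ = ((k / 2^(N-j) : ℕ) : ℤ) := by
  have hPpos : (0:ℝ) < (2:ℝ)^(N-j) := by positivity
  have hpow : (2:ℝ)^j * (2:ℝ)^(N-j) = (2:ℝ)^N := by rw [← pow_add]; congr 1; omega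
  have e : (2:ℝ)^N * x = ((2:ℝ)^j * x) * 2^(N-j) := by rw [← hpow]; ring
  have hq1 : ((k / 2^(N-j) : ℕ) : ℝ) * 2^(N-j) ≤ (2:ℝ)^N * x := by
    have hn : (k / 2^(N-j)) * 2^(N-j) ≤ k := Nat.div_mul_le_self _ _
    calc ((k / 2^(N-j) : ℕ):ℝ) * 2^(N-j) = (((k / 2^(N-j)) * 2^(N-j) : ℕ) : ℝ) := by
          push_cast; ring
      _ ≤ (k:ℝ) := by exact_mod_cast hn
      _ ≤ _ := h1
  have hq2 : (2:ℝ)^N * x < (((k / 2^(N-j) : ℕ) : ℝ) + 1) * 2^(N-j) := by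
    have hn : k + 1 ≤ (k / 2^(N-j) + 1) * 2^(N-j) := by
      have hdm := Nat.div_add_mod k (2^(N-j))
      have hmlt : k % 2^(N-j) < 2^(N-j) := Nat.mod_lt _ (by positivity)
      have hx : (k / 2^(N-j) + 1) * 2^(N-j) = 2^(N-j) * (k / 2^(N-j)) + 2^(N-j) := by ring
      omega
    calc (2:ℝ)^N * x < (k:ℝ)+1 := h2
      _ ≤ (((k / 2^(N-j) + 1) * 2^(N-j) : ℕ) : ℝ) := by exact_mod_cast hn
      _ = (((k / 2^(N-j):ℕ):ℝ)+1) * 2^(N-j) := by push_cast; ring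
  rw [Int.floor_eq_iff]
  refine ⟨?_, ?_⟩
  · rw [e] at hq1
    have h := le_of_mul_le_mul_right hq1 hPpos
    exact_mod_cast h
  · rw [e] at hq2
    have h := lt_of_mul_lt_mul_right hq2 hPpos.le
    exact_mod_cast h

lemma floor_pow_eq (x : ℝ) (hx0 : 0 ≤ x) (N j : ℕ) (hj : j ≤ N) :
    ⌊(2:ℝ)^j * x⌋ = ((⌊(2:ℝ)^N * x⌋.toNat / 2^(N-j) : ℕ) : ℤ) := by
  have hfl : (0:ℝ) ≤ (2:ℝ)^N * x := by positivity
  have hnn : (0:ℤ) ≤ ⌊(2:ℝ)^N * x⌋ := Int.floor_nonneg.mpr hfl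
  have h3 : ((⌊(2:ℝ)^N * x⌋.toNat : ℕ) : ℝ) = ((⌊(2:ℝ)^N*x⌋ : ℤ) : ℝ) := by
    exact_mod_cast congrArg (fun z : ℤ => (z : ℝ)) (Int.toNat_of_nonneg hnn)
  apply floor_pow_div x j N hj
  · rw [h3]; exact Int.floor_le _
  · rw [h3]; exact Int.lt_floor_add_one _

lemma count_eq_zc (x : ℝ) (hx0 : 0 ≤ x) (N : ℕ) :
    ((Finset.Icc 1 N).filter fun j => ⌊(2:ℝ) ^ j * x⌋ % 2 = 0).card
      = zc (⌊(2:ℝ)^N * x⌋.toNat) N := by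
  classical
  rw [zc, ← Finset.card_filter]
  apply Finset.card_nbij' (fun j => N - j) (fun i => N - i)
  · intro j hj
    simp only [Finset.mem_coe, Finset.mem_filter, Finset.mem_Icc] at hj
    simp only [Finset.mem_coe, Finset.mem_filter, Finset.mem_range]
    obtain ⟨⟨hj1, hjN⟩, hpar⟩ := hj
    refine ⟨by omega, ?_⟩
    rw [floor_pow_eq x hx0 N j hjN] at hpar
    exact_mod_cast hpar
  · intro i hi
    simp only [Finset.mem_coe, Finset.mem_filter, Finset.mem_range] at hi
    simp only [Finset.mem_coe, Finset.mem_filter, Finset.mem_Icc]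
    obtain ⟨hiN, hpar⟩ := hi
    refine ⟨⟨by omega, by omega⟩, ?_⟩
    rw [floor_pow_eq x hx0 N (N - i) (by omega)]
    have h : N - (N - i) = i := by omega
    rw [h]
    exact_mod_cast hpar
  · intro j hj
    simp only [Finset.mem_coe, Finset.mem_filter, Finset.mem_Icc] at hj
    dsimp only; omega
  · intro i hi
    simp only [Finset.mem_coe, Finset.mem_filter, Finset.mem_range] at hi
    dsimp only; omega


section
variable {A₀ A₁ : ℕ} {r : ℝ}
variable (hA0 : 1 ≤ A₀) (hlt : A₀ < A₁)

include hA0 hlt in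
lemma theta_pos : 0 < (2*(A₁:ℝ)/((A₀:ℝ)+A₁)) * ((A₀:ℝ)/A₁) ^ r := by
  have h0 : (0:ℝ) < A₀ := by exact_mod_cast hA0
  have h1 : (0:ℝ) < A₁ := by have : (1:ℕ) < A₁ := lt_of_le_of_lt hA0 hlt; exact_mod_cast Nat.lt_of_lt_of_le Nat.zero_lt_one this.le
  have h2 : (0:ℝ) < (A₀:ℝ) + A₁ := by linarith
  have h3 : (0:ℝ) < (A₀:ℝ)/A₁ := by positivity
  positivity

include hA0 hlt in
lemma theta_lt_one
    (hr : Real.log (2 * (A₁ : ℝ) / ((A₀ : ℝ) + A₁)) / Real.log ((A₁ : ℝ) / A₀) < r) :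
    (2*(A₁:ℝ)/((A₀:ℝ)+A₁)) * ((A₀:ℝ)/A₁) ^ r < 1 := by
  have h0 : (0:ℝ) < A₀ := by exact_mod_cast hA0
  have h1 : (0:ℝ) < A₁ := by have : (1:ℕ) < A₁ := lt_of_le_of_lt hA0 hlt; exact_mod_cast Nat.lt_of_lt_of_le Nat.zero_lt_one this.le
  have h2 : (0:ℝ) < (A₀:ℝ) + A₁ := by linarith
  have hq : (0:ℝ) < (A₀:ℝ)/A₁ := by positivity
  have hgt : (1:ℝ) < (A₁:ℝ)/A₀ := by
    rw [lt_div_iff₀ h0]; rw [one_mul]; exact_mod_cast hlt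
  have hL : 0 < Real.log ((A₁:ℝ)/A₀) := Real.log_pos hgt
  have hlog : Real.log (2 * (A₁ : ℝ) / ((A₀ : ℝ) + A₁)) < r * Real.log ((A₁ : ℝ) / A₀) := by
    rw [div_lt_iff₀ hL] at hr; exact hr
  have hinv : Real.log ((A₀:ℝ)/A₁) = - Real.log ((A₁:ℝ)/A₀) := by
    rw [← Real.log_inv]
    congr 1
    field_simp
  have hθpos := theta_pos hA0 hlt (r := r)
  have hlogθ : Real.log ((2*(A₁:ℝ)/((A₀:ℝ)+A₁)) * ((A₀:ℝ)/A₁) ^ r) < 0 := by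
    rw [Real.log_mul (by positivity) (by positivity), Real.log_rpow hq, hinv]
    linarith
  exact (Real.log_neg_iff hθpos).mp hlogθ

include hA0 hlt in
lemma pow_bound (N c : ℕ) (hc1 : r * N ≤ c) (hcN : c ≤ N) :
    ((2^N * (A₀^c * A₁^(N-c)) : ℕ) : ℝ) / (((A₀+A₁)^N : ℕ) : ℝ)
      ≤ ((2*(A₁:ℝ)/((A₀:ℝ)+A₁)) * ((A₀:ℝ)/A₁) ^ r) ^ N := by
  have h0 : (0:ℝ) < A₀ := by exact_mod_cast hA0
  have h1 : (0:ℝ) < A₁ := by have : (1:ℕ) < A₁ := lt_of_le_of_lt hA0 hlt; exact_mod_cast Nat.lt_of_lt_of_le Nat.zero_lt_one this.le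
  have h2 : (0:ℝ) < (A₀:ℝ) + A₁ := by linarith
  have hq0 : (0:ℝ) < (A₀:ℝ)/A₁ := by positivity
  have hq1 : (A₀:ℝ)/A₁ ≤ 1 := by
    rw [div_le_one h1]; exact_mod_cast hlt.le
  -- rewrite LHS
  have key : ((2^N * (A₀^c * A₁^(N-c)) : ℕ) : ℝ) / (((A₀+A₁)^N : ℕ) : ℝ)
      = (2*(A₁:ℝ)/((A₀:ℝ)+A₁))^N * ((A₀:ℝ)/A₁)^(c:ℕ) := by
    push_cast
    rw [div_pow, mul_pow, div_pow]
    have hc : (A₁:ℝ)^(N-c) = (A₁:ℝ)^N / (A₁:ℝ)^c := by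
      rw [eq_div_iff (by positivity), ← pow_add]
      congr 1; omega
    rw [hc]
    field_simp
  rw [key]
  have hmono : ((A₀:ℝ)/A₁)^(c:ℕ) ≤ (((A₀:ℝ)/A₁) ^ r) ^ N := by
    rw [← Real.rpow_natCast ((A₀:ℝ)/A₁) c]
    have step1 : ((A₀:ℝ)/A₁) ^ (c:ℝ) ≤ ((A₀:ℝ)/A₁) ^ (r * N) :=
      Real.rpow_le_rpow_of_exponent_ge hq0 hq1 hc1
    have step2 : ((A₀:ℝ)/A₁) ^ (r * (N:ℝ)) = (((A₀:ℝ)/A₁) ^ r) ^ N := by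
      rw [Real.rpow_mul hq0.le, Real.rpow_natCast]
    rw [← step2]
    exact step1
  calc (2*(A₁:ℝ)/((A₀:ℝ)+A₁))^N * ((A₀:ℝ)/A₁)^(c:ℕ)
      ≤ (2*(A₁:ℝ)/((A₀:ℝ)+A₁))^N * (((A₀:ℝ)/A₁) ^ r) ^ N := by
        apply mul_le_mul_of_nonneg_left hmono (by positivity)
    _ = ((2*(A₁:ℝ)/((A₀:ℝ)+A₁)) * ((A₀:ℝ)/A₁) ^ r) ^ N := by rw [mul_pow]

lemma poly_geom_decay (C₁ C₂ θ : ℝ) (h0 : 0 ≤ θ) (h1 : θ < 1) :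
    Tendsto (fun N : ℕ => (C₁ + C₂ * N) * θ^N) atTop (𝓝 0) := by
  have hg : Tendsto (fun N : ℕ => θ^N) atTop (𝓝 0) :=
    tendsto_pow_atTop_nhds_zero_of_lt_one h0 h1
  have hng : Tendsto (fun N : ℕ => (N:ℝ) * θ^N) atTop (𝓝 0) := by
    have hs : Summable (fun N : ℕ => (N:ℝ)^1 * θ^N) :=
      summable_pow_mul_geometric_of_norm_lt_one 1 (by rwa [Real.norm_eq_abs, abs_of_nonneg h0])
    simpa using hs.tendsto_atTop_zero
  have := (hg.const_mul C₁).add (hng.const_mul C₂)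
  simp only [mul_zero, add_zero] at this
  apply this.congr
  intro N
  ring

end

/-- helper: mixed powers are antitone in the number of `A₀` factors -/
lemma pow_mix_le {A₀ A₁ : ℕ} (hlt : A₀ ≤ A₁) {c z N : ℕ} (hcz : c ≤ z) (hzN : z ≤ N) :
    A₀^z * A₁^(N-z) ≤ A₀^c * A₁^(N-c) := by
  have h1 : A₀^z = A₀^c * A₀^(z-c) := by rw [← pow_add]; congr 1; omega
  have h2 : A₀^(z-c) ≤ A₁^(z-c) := Nat.pow_le_pow_left hlt _
  have h3 : A₁^(z-c) * A₁^(N-z) = A₁^(N-c) := by rw [← pow_add]; congr 1; omega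
  calc A₀^z * A₁^(N-z) = A₀^c * (A₀^(z-c) * A₁^(N-z)) := by rw [h1]; ring
    _ ≤ A₀^c * (A₁^(z-c) * A₁^(N-z)) :=
        Nat.mul_le_mul_left _ (Nat.mul_le_mul_right _ h2)
    _ = A₀^c * A₁^(N-c) := by rw [h3]


open scoped Classical in
lemma measure_G_zero
    (A₀ A₁ b₀ b₁ : ℕ) (f : ℕ → ℕ) (hf1 : 1 ≤ f 1)
    (heven : ∀ n, 1 ≤ n → f (2 * n) = A₀ * f n + b₀)
    (hodd : ∀ n, 1 ≤ n → f (2 * n + 1) = A₁ * f n + b₁)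
    (hb : 1 ≤ b₀ + b₁) (hA0 : 1 ≤ A₀) (hlt : A₀ < A₁)
    (μ : Measure ℝ) (hμ : IsProbabilityMeasure μ)
    (hlim : WeakLimit (ghostApprox f) μ)
    (r : ℝ)
    (hΛr : Real.log (2 * (A₁ : ℝ) / ((A₀ : ℝ) + A₁)) / Real.log ((A₁ : ℝ) / A₀) < r)
    (hr1 : r < 1) (N₀ : ℕ) :
    μ {x ∈ Set.Ico (0:ℝ) 1 |
        ∀ N, N₀ ≤ N → r * N < (zc (⌊(2:ℝ)^N * x⌋.toNat) N : ℝ)} = 0 := by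
  have hA1 : 1 ≤ A₁ := le_of_lt (lt_of_le_of_lt hA0 hlt)
  have hs3 : 3 ≤ A₀ + A₁ := by omega
  have hsR : (0:ℝ) < ((A₀:ℝ) + A₁) := by
    have : (3:ℝ) ≤ (A₀:ℝ) + A₁ := by exact_mod_cast hs3
    linarith
  have hSig : ∀ M, 0 < Sig f M := fun M =>
    lt_of_lt_of_le (Nat.pow_pos (n := M) (by omega)) (Sig_lb hf1 heven hodd hA0 hlt M)
  set θ := (2*(A₁:ℝ)/((A₀:ℝ)+A₁)) * ((A₀:ℝ)/A₁) ^ r with hθdef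
  have hθ0 : 0 < θ := theta_pos hA0 hlt
  have hθ1 : θ < 1 := theta_lt_one hA0 hlt hΛr
  set G := {x ∈ Set.Ico (0:ℝ) 1 |
      ∀ N, N₀ ≤ N → r * N < (zc (⌊(2:ℝ)^N * x⌋.toNat) N : ℝ)} with hGdef
  -- probability-measure convergence
  have hP : ∀ M, IsProbabilityMeasure (ghostApprox f M) := fun M => ghost_isProb f M (hSig M)
  let P : ℕ → ProbabilityMeasure ℝ := fun M => ⟨ghostApprox f M, hP M⟩
  have htend : Tendsto P atTop (𝓝 (⟨μ, hμ⟩ : ProbabilityMeasure ℝ)) := by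
    refine ProbabilityMeasure.tendsto_iff_forall_integral_tendsto.mpr ?_
    intro g
    exact hlim g
  -- main bound for each level N
  have main : ∀ N, N₀ ≤ N → 1 ≤ N →
      μ G ≤ ENNReal.ofReal (((f 1 : ℝ) + (b₀+b₁)*(N+1)) * θ^N) := by
    intro N hNN₀ hN1
    have hM₀bound : ∀ M₀, N ≤ M₀ →
        μ G ≤ ENNReal.ofReal (((f 1 : ℝ) + (b₀+b₁)*(N+1)) * θ^N +
          (2:ℝ)^N * (((A₁:ℝ)^M₀ * ((f 1:ℝ) + (b₀+b₁)*M₀) + (b₀+b₁)*2^M₀) / ((A₀:ℝ)+A₁)^M₀)) := by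
      intro M₀ hM₀
      set Bad : Finset ℕ := (Finset.range (2^N)).filter (fun k => r * N < (zc k N : ℝ)) with hBadDef
      set U : Set ℝ :=
        ⋃ k ∈ Bad, Set.Ioo ((k:ℝ)/2^N - ((2:ℝ)^M₀)⁻¹) (((k:ℝ)+1)/2^N) with hUdef
      have hUopen : IsOpen U := isOpen_biUnion (fun k _ => isOpen_Ioo)
      -- G is contained in U
      have hGU : G ⊆ U := by
        intro x hx
        obtain ⟨⟨hx0, hx1⟩, hxall⟩ := hx
        have hzk := hxall N hNN₀
        have hfl0 : (0:ℝ) ≤ (2:ℝ)^N * x := by positivity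
        have hnn : (0:ℤ) ≤ ⌊(2:ℝ)^N * x⌋ := Int.floor_nonneg.mpr hfl0
        have hcast : ((⌊(2:ℝ)^N * x⌋.toNat : ℕ):ℝ) = ((⌊(2:ℝ)^N * x⌋ : ℤ) : ℝ) := by
          exact_mod_cast congrArg (fun z : ℤ => (z:ℝ)) (Int.toNat_of_nonneg hnn)
        have hle : ((⌊(2:ℝ)^N * x⌋.toNat : ℕ):ℝ) ≤ (2:ℝ)^N * x := by
          rw [hcast]; exact Int.floor_le _
        have hlt2 : (2:ℝ)^N * x < ((⌊(2:ℝ)^N * x⌋.toNat : ℕ):ℝ) + 1 := by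
          rw [hcast]; exact Int.lt_floor_add_one _
        have hpN : (0:ℝ) < (2:ℝ)^N := by positivity
        have hklt : ⌊(2:ℝ)^N * x⌋.toNat < 2^N := by
          have hh : ((⌊(2:ℝ)^N * x⌋.toNat : ℕ):ℝ) < ((2^N : ℕ):ℝ) := by
            push_cast
            nlinarith
          exact_mod_cast hh
        have hkBad : ⌊(2:ℝ)^N * x⌋.toNat ∈ Bad :=
          Finset.mem_filter.mpr ⟨Finset.mem_range.mpr hklt, hzk⟩
        refine Set.mem_biUnion hkBad ?_
        constructor
        · have h1 : ((⌊(2:ℝ)^N * x⌋.toNat : ℕ):ℝ)/2^N ≤ x := by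
            rw [div_le_iff₀ hpN]; nlinarith
          have h2 : (0:ℝ) < ((2:ℝ)^M₀)⁻¹ := by positivity
          linarith
        · rw [lt_div_iff₀ hpN]; nlinarith
      -- portmanteau
      have hport : μ U ≤ atTop.liminf (fun M => ghostApprox f M U) :=
        ProbabilityMeasure.le_liminf_measure_open_of_tendsto htend hUopen
      -- the uniform bound on the approximants
      have hbound : ∀ M, M₀ ≤ M → ghostApprox f M U ≤
          ENNReal.ofReal (((f 1 : ℝ) + (b₀+b₁)*(N+1)) * θ^N +
          (2:ℝ)^N * (((A₁:ℝ)^M₀ * ((f 1:ℝ) + (b₀+b₁)*M₀) + (b₀+b₁)*2^M₀) / ((A₀:ℝ)+A₁)^M₀)) := by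
        intro M hM
        have hMN : N ≤ M := le_trans hM₀ hM
        rw [ghost_apply f M U hUopen.measurableSet]
        set c : ℕ := ⌈r * N⌉₊ with hcdef
        have hcN : c ≤ N := by
          apply Nat.ceil_le.mpr
          have hh : r * N ≤ 1 * N :=
            mul_le_mul_of_nonneg_right hr1.le (by positivity)
          simpa using hh
        set Bad2 : Finset ℕ := Bad.image (fun k => k * 2^(M₀-N) - 1) with hBad2Def
        -- the atoms hitting U lie in bad cylinders or gap cylinders
        have hsub : (Finset.range (2^M)).filter (fun n : ℕ => (n:ℝ)/2^M ∈ U)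
            ⊆ ((Finset.range (2^M)).filter (fun n => n / 2^(M-N) ∈ Bad))
              ∪ ((Finset.range (2^M)).filter (fun n => n / 2^(M-M₀) ∈ Bad2)) := by
          intro n hn
          obtain ⟨hnr, hnU⟩ := Finset.mem_filter.mp hn
          obtain ⟨k, hkBad, hlo, hhi⟩ := Set.mem_iUnion₂.mp hnU
          have hpN : (0:ℝ) < (2:ℝ)^N := by positivity
          have hpM : (0:ℝ) < (2:ℝ)^M := by positivity
          have hpM₀ : (0:ℝ) < (2:ℝ)^M₀ := by positivity
          have heM : (2:ℝ)^M = 2^(M-N) * 2^N := by rw [← pow_add]; congr 1; omega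
          have heM' : (2:ℝ)^M = 2^(M-M₀) * 2^M₀ := by rw [← pow_add]; congr 1; omega
          have heM₀ : (2:ℝ)^M₀ = 2^(M₀-N) * 2^N := by rw [← pow_add]; congr 1; omega
          rcases le_or_gt ((k:ℝ)/2^N) ((n:ℝ)/2^M) with hcase | hcase
          · apply Finset.mem_union_left
            refine Finset.mem_filter.mpr ⟨hnr, ?_⟩
            rw [div_le_div_iff₀ hpN hpM, heM] at hcase
            have h1 : (k:ℝ) * 2^(M-N) ≤ n := by
              apply le_of_mul_le_mul_right _ hpN
              calc (k:ℝ) * 2^(M-N) * 2^N = k * (2^(M-N) * 2^N) := by ring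
                _ ≤ (n:ℝ) * 2^N := hcase
            rw [div_lt_div_iff₀ hpM hpN, heM] at hhi
            have h2 : (n:ℝ) < ((k:ℝ)+1) * 2^(M-N) := by
              apply lt_of_mul_lt_mul_right _ hpN.le
              calc (n:ℝ) * 2^N < ((k:ℝ)+1) * (2^(M-N) * 2^N) := hhi
                _ = ((k:ℝ)+1) * 2^(M-N) * 2^N := by ring
            have h1' : k * 2^(M-N) ≤ n := by exact_mod_cast h1
            have h2' : n < (k+1) * 2^(M-N) := by exact_mod_cast h2
            rw [Nat.div_eq_of_lt_le h1' h2']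
            exact hkBad
          · apply Finset.mem_union_right
            refine Finset.mem_filter.mpr ⟨hnr, ?_⟩
            have hk1 : 1 ≤ k := by
              by_contra hcon
              have hk0 : k = 0 := by omega
              rw [hk0] at hcase
              norm_num at hcase
              have hge : (0:ℝ) ≤ (n:ℝ)/2^M := by positivity
              linarith
            have ha1 : 1 ≤ k * 2^(M₀-N) := by
              have := Nat.mul_le_mul hk1 (Nat.one_le_two_pow (n := M₀ - N))
              omega
            have hacast : ((k * 2^(M₀-N) - 1 : ℕ):ℝ) = (k:ℝ) * 2^(M₀-N) - 1 := by
              push_cast [Nat.cast_sub ha1]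
              ring
            have haBad2 : k * 2^(M₀-N) - 1 ∈ Bad2 :=
              Finset.mem_image.mpr ⟨k, hkBad, rfl⟩
            have e1 : ((k * 2^(M₀-N) - 1 : ℕ):ℝ)/2^M₀ = (k:ℝ)/2^N - ((2:ℝ)^M₀)⁻¹ := by
              rw [hacast, heM₀]
              field_simp
            have hlow : ((k * 2^(M₀-N) - 1 : ℕ):ℝ) * 2^(M-M₀) < n := by
              have h3 : ((k * 2^(M₀-N) - 1 : ℕ):ℝ)/2^M₀ < (n:ℝ)/2^M := by rw [e1]; exact hlo
              rw [div_lt_div_iff₀ hpM₀ hpM, heM'] at h3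
              apply lt_of_mul_lt_mul_right _ hpM₀.le
              calc ((k * 2^(M₀-N) - 1 : ℕ):ℝ) * 2^(M-M₀) * 2^M₀
                  = ((k * 2^(M₀-N) - 1 : ℕ):ℝ) * (2^(M-M₀) * 2^M₀) := by ring
                _ < (n:ℝ) * 2^M₀ := h3
            have hhigh : (n:ℝ) < (((k * 2^(M₀-N) - 1 : ℕ):ℝ)+1) * 2^(M-M₀) := by
              have e2 : (((k * 2^(M₀-N) - 1 : ℕ):ℝ)+1)/2^M₀ = (k:ℝ)/2^N := by
                rw [hacast, heM₀]
                field_simp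
                ring
              have h4 : (n:ℝ)/2^M < (((k * 2^(M₀-N) - 1 : ℕ):ℝ)+1)/2^M₀ := by
                rw [e2]; exact hcase
              rw [div_lt_div_iff₀ hpM hpM₀, heM'] at h4
              apply lt_of_mul_lt_mul_right _ hpM₀.le
              calc (n:ℝ) * 2^M₀ < (((k * 2^(M₀-N) - 1 : ℕ):ℝ)+1) * (2^(M-M₀) * 2^M₀) := h4
                _ = (((k * 2^(M₀-N) - 1 : ℕ):ℝ)+1) * 2^(M-M₀) * 2^M₀ := by ring
            have hlow' : (k * 2^(M₀-N) - 1) * 2^(M-M₀) ≤ n := by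
              have hh : (k * 2^(M₀-N) - 1) * 2^(M-M₀) < n := by exact_mod_cast hlow
              omega
            have hhigh' : n < ((k * 2^(M₀-N) - 1) + 1) * 2^(M-M₀) := by exact_mod_cast hhigh
            rw [Nat.div_eq_of_lt_le hlow' hhigh']
            exact haBad2
        -- ℕ-level bounds
        have hP1 : 1 ≤ A₀^c * A₁^(N-c) := by
          have h1 : 1 ≤ A₀^c := Nat.one_le_pow _ _ hA0
          have h2 : 1 ≤ A₁^(N-c) := Nat.one_le_pow _ _ hA1
          exact le_trans (by norm_num) (Nat.mul_le_mul h1 h2)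
        have hcardBad : Bad.card ≤ 2^N := by
          rw [hBadDef]
          calc ((Finset.range (2^N)).filter _).card
              ≤ (Finset.range (2^N)).card := Finset.card_filter_le _ _
            _ = 2^N := Finset.card_range _
        have hSB0 : SB f N Bad 0 ≤ 2^N * (A₀^c * A₁^(N-c) * (f 1 + (b₀+b₁)*N)) := by
          rw [SB_zero]
          have hfil : (Finset.range (2^N)).filter (· ∈ Bad) = Bad := by
            rw [Finset.filter_mem_eq_inter, Finset.inter_eq_right, hBadDef]
            exact Finset.filter_subset _ _
          rw [hfil]
          have hper : ∀ k ∈ Bad, f (2^N + k) ≤ A₀^c * A₁^(N-c) * (f 1 + (b₀+b₁)*N) := by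
            intro k hk
            rw [hBadDef] at hk
            obtain ⟨hkr, hkz⟩ := Finset.mem_filter.mp hk
            have hkR := Finset.mem_range.mp hkr
            have hfu := f_ub heven hodd hA0 hlt N k hkR
            have hcz : c ≤ zc k N := Nat.ceil_le.mpr (le_of_lt hkz)
            have hmix := pow_mix_le hlt.le hcz (zc_le k N)
            exact le_trans hfu (Nat.mul_le_mul_right _ hmix)
          calc ∑ k ∈ Bad, f (2^N + k)
              ≤ Bad.card * (A₀^c * A₁^(N-c) * (f 1 + (b₀+b₁)*N)) := by
                have := Finset.sum_le_card_nsmul Bad _ _ hper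
                simpa [smul_eq_mul] using this
            _ ≤ 2^N * (A₀^c * A₁^(N-c) * (f 1 + (b₀+b₁)*N)) := Nat.mul_le_mul_right _ hcardBad
        have hSB0' : SB f M₀ Bad2 0 ≤ 2^N * (A₁^M₀ * (f 1 + (b₀+b₁)*M₀)) := by
          rw [SB_zero]
          have hsubB2 : (Finset.range (2^M₀)).filter (· ∈ Bad2) ⊆ Bad2 := fun a ha =>
            (Finset.mem_filter.mp ha).2
          have hcard2 : ((Finset.range (2^M₀)).filter (· ∈ Bad2)).card ≤ 2^N := by
            calc ((Finset.range (2^M₀)).filter (· ∈ Bad2)).card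
                ≤ Bad2.card := Finset.card_le_card hsubB2
              _ ≤ Bad.card := by rw [hBad2Def]; exact Finset.card_image_le
              _ ≤ 2^N := hcardBad
          have hper : ∀ a ∈ (Finset.range (2^M₀)).filter (· ∈ Bad2),
              f (2^M₀ + a) ≤ A₁^M₀ * (f 1 + (b₀+b₁)*M₀) := by
            intro a ha
            have haR := Finset.mem_range.mp (Finset.mem_filter.mp ha).1
            have hfu := f_ub heven hodd hA0 hlt M₀ a haR
            have hmix := pow_mix_le hlt.le (Nat.zero_le (zc a M₀)) (zc_le a M₀)
            have hmix' : A₀ ^ zc a M₀ * A₁ ^ (M₀ - zc a M₀) ≤ A₁ ^ M₀ := by simpa using hmix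
            exact le_trans hfu (Nat.mul_le_mul_right _ hmix')
          calc ∑ a ∈ (Finset.range (2^M₀)).filter (· ∈ Bad2), f (2^M₀ + a)
              ≤ ((Finset.range (2^M₀)).filter (· ∈ Bad2)).card
                  * (A₁^M₀ * (f 1 + (b₀+b₁)*M₀)) := by
                have := Finset.sum_le_card_nsmul _ _ _ hper
                simpa [smul_eq_mul] using this
            _ ≤ 2^N * (A₁^M₀ * (f 1 + (b₀+b₁)*M₀)) := Nat.mul_le_mul_right _ hcard2
        have hB1 : ∑ n ∈ (Finset.range (2^M)).filter (fun n => n / 2^(M-N) ∈ Bad), f (2^M + n)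
            ≤ (A₀+A₁)^(M-N) * (2^N * (A₀^c * A₁^(N-c) * (f 1 + (b₀+b₁)*N)) + (b₀+b₁)*2^N) := by
          have hF1 : ∑ n ∈ (Finset.range (2^M)).filter (fun n => n / 2^(M-N) ∈ Bad), f (2^M + n)
              = SB f N Bad (M-N) := by
            rw [SB]
            have hMeq : N + (M-N) = M := by omega
            rw [hMeq, Finset.sum_filter]
          rw [hF1]
          have h1 := SB_le heven hodd hA0 hlt (f := f) N Bad (M-N)
          have h2 : (A₀+A₁)^(M-N) * (SB f N Bad 0 + (b₀+b₁)*2^N)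
              ≤ (A₀+A₁)^(M-N) * (2^N * (A₀^c * A₁^(N-c) * (f 1 + (b₀+b₁)*N)) + (b₀+b₁)*2^N) :=
            Nat.mul_le_mul_left _ (by omega)
          have h3 : N + (M-N) = M := by omega
          omega
        have hB2 : ∑ n ∈ (Finset.range (2^M)).filter (fun n => n / 2^(M-M₀) ∈ Bad2), f (2^M + n)
            ≤ (A₀+A₁)^(M-M₀) * (2^N * (A₁^M₀ * (f 1 + (b₀+b₁)*M₀)) + (b₀+b₁)*2^M₀) := by
          have hF2 : ∑ n ∈ (Finset.range (2^M)).filter (fun n => n / 2^(M-M₀) ∈ Bad2), f (2^M + n)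
              = SB f M₀ Bad2 (M-M₀) := by
            rw [SB]
            have hMeq : M₀ + (M-M₀) = M := by omega
            rw [hMeq, Finset.sum_filter]
          rw [hF2]
          have h1 := SB_le heven hodd hA0 hlt (f := f) M₀ Bad2 (M-M₀)
          have h2 : (A₀+A₁)^(M-M₀) * (SB f M₀ Bad2 0 + (b₀+b₁)*2^M₀)
              ≤ (A₀+A₁)^(M-M₀) * (2^N * (A₁^M₀ * (f 1 + (b₀+b₁)*M₀)) + (b₀+b₁)*2^M₀) :=
            Nat.mul_le_mul_left _ (by omega)
          have h3 : M₀ + (M-M₀) = M := by omega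
          omega
        have hsum : ∑ n ∈ (Finset.range (2^M)).filter (fun n : ℕ => (n:ℝ)/2^M ∈ U), f (2^M + n)
            ≤ (A₀+A₁)^(M-N) * (2^N * (A₀^c * A₁^(N-c) * (f 1 + (b₀+b₁)*N)) + (b₀+b₁)*2^N)
              + (A₀+A₁)^(M-M₀) * (2^N * (A₁^M₀ * (f 1 + (b₀+b₁)*M₀)) + (b₀+b₁)*2^M₀) := by
          have h1 := Finset.sum_le_sum_of_subset (f := fun n => f (2^M+n)) hsub
          have h2 := Finset.sum_union_inter
            (s₁ := (Finset.range (2^M)).filter (fun n => n / 2^(M-N) ∈ Bad))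
            (s₂ := (Finset.range (2^M)).filter (fun n => n / 2^(M-M₀) ∈ Bad2))
            (f := fun n => f (2^M+n))
          beta_reduce at h1 h2
          omega
        -- pass to ℝ≥0∞
        have hSigR : (0:ℝ) < (Sig f M : ℝ) := by exact_mod_cast hSig M
        have hcastsum : ∑ n ∈ (Finset.range (2^M)).filter (fun n : ℕ => (n:ℝ)/2^M ∈ U),
            ((f (2^M+n) : ℕ) : ENNReal)
            = (((∑ n ∈ (Finset.range (2^M)).filter (fun n : ℕ => (n:ℝ)/2^M ∈ U),
                f (2^M+n)) : ℕ) : ENNReal) := by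
          rw [Nat.cast_sum]
        rw [hcastsum]
        have heq : ((Sig f M : ℕ) : ENNReal)⁻¹ *
            (((∑ n ∈ (Finset.range (2^M)).filter (fun n : ℕ => (n:ℝ)/2^M ∈ U),
                f (2^M+n)) : ℕ) : ENNReal)
            = ENNReal.ofReal (((∑ n ∈ (Finset.range (2^M)).filter (fun n : ℕ => (n:ℝ)/2^M ∈ U),
                f (2^M+n)) : ℕ) / (Sig f M : ℝ)) := by
          rw [ENNReal.ofReal_div_of_pos hSigR, ENNReal.ofReal_natCast, ENNReal.ofReal_natCast,
            div_eq_mul_inv, mul_comm]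
        rw [heq]
        apply ENNReal.ofReal_le_ofReal
        -- the purely real estimate
        have hsRpos : (0:ℝ) < (A₀:ℝ) + (A₁:ℝ) := hsR
        have hSgeo : ((A₀:ℝ) + (A₁:ℝ))^M ≤ (Sig f M:ℝ) := by
          have h := Sig_lb hf1 heven hodd hA0 hlt M
          have h2 : (((A₀+A₁)^M : ℕ):ℝ) ≤ (Sig f M:ℝ) := by exact_mod_cast h
          calc ((A₀:ℝ) + (A₁:ℝ))^M = (((A₀+A₁)^M : ℕ):ℝ) := by push_cast; ring
            _ ≤ _ := h2
        have hnum_le : ((∑ n ∈ (Finset.range (2^M)).filter (fun n : ℕ => (n:ℝ)/2^M ∈ U),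
              f (2^M+n) : ℕ):ℝ)
            ≤ ((A₀:ℝ)+A₁)^(M-N) * ((2:ℝ)^N * ((A₀:ℝ)^c * (A₁:ℝ)^(N-c) *
                ((f 1:ℝ) + ((b₀:ℝ)+b₁)*N)) + ((b₀:ℝ)+b₁)*2^N)
              + ((A₀:ℝ)+A₁)^(M-M₀) * ((2:ℝ)^N * ((A₁:ℝ)^M₀ *
                ((f 1:ℝ) + ((b₀:ℝ)+b₁)*M₀)) + ((b₀:ℝ)+b₁)*2^M₀) := by
          exact_mod_cast hsum
        have hpart : ∀ (a : ℝ) (i : ℕ), i ≤ M →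
            ((A₀:ℝ)+A₁)^(M-i) * a / ((A₀:ℝ)+A₁)^M = a / ((A₀:ℝ)+A₁)^i := by
          intro a i hi
          have e : ((A₀:ℝ)+A₁)^M = ((A₀:ℝ)+A₁)^(M-i) * ((A₀:ℝ)+A₁)^i := by
            rw [← pow_add]; congr 1; omega
          rw [e, mul_div_mul_left _ _ (by positivity)]
        have hstep : ((∑ n ∈ (Finset.range (2^M)).filter (fun n : ℕ => (n:ℝ)/2^M ∈ U),
              f (2^M+n) : ℕ):ℝ) / (Sig f M : ℝ)
            ≤ ((2:ℝ)^N * ((A₀:ℝ)^c * (A₁:ℝ)^(N-c) * ((f 1:ℝ) + ((b₀:ℝ)+b₁)*N))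
                + ((b₀:ℝ)+b₁)*2^N) / ((A₀:ℝ)+A₁)^N
              + ((2:ℝ)^N * ((A₁:ℝ)^M₀ * ((f 1:ℝ) + ((b₀:ℝ)+b₁)*M₀))
                + ((b₀:ℝ)+b₁)*2^M₀) / ((A₀:ℝ)+A₁)^M₀ := by
          have hd : ((∑ n ∈ (Finset.range (2^M)).filter (fun n : ℕ => (n:ℝ)/2^M ∈ U),
                f (2^M+n) : ℕ):ℝ) / (Sig f M : ℝ)
              ≤ (((A₀:ℝ)+A₁)^(M-N) * ((2:ℝ)^N * ((A₀:ℝ)^c * (A₁:ℝ)^(N-c) *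
                  ((f 1:ℝ) + ((b₀:ℝ)+b₁)*N)) + ((b₀:ℝ)+b₁)*2^N)
                + ((A₀:ℝ)+A₁)^(M-M₀) * ((2:ℝ)^N * ((A₁:ℝ)^M₀ *
                  ((f 1:ℝ) + ((b₀:ℝ)+b₁)*M₀)) + ((b₀:ℝ)+b₁)*2^M₀)) / ((A₀:ℝ)+(A₁:ℝ))^M :=
            div_le_div₀ (by positivity) hnum_le (by positivity) hSgeo
          rw [add_div, hpart _ N hMN,  hpart _ M₀ hM] at hd
          exact hd
        refine le_trans hstep (add_le_add ?_ ?_)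
        · -- main term
          have hP1R : (1:ℝ) ≤ (A₀:ℝ)^c * (A₁:ℝ)^(N-c) := by exact_mod_cast hP1
          have hC0 : (0:ℝ) ≤ (f 1:ℝ) + ((b₀:ℝ)+b₁)*(N+1) := by positivity
          have hXleR : (2:ℝ)^N * ((A₀:ℝ)^c * (A₁:ℝ)^(N-c) * ((f 1:ℝ) + ((b₀:ℝ)+b₁)*N))
                + ((b₀:ℝ)+b₁)*2^N
              ≤ ((2:ℝ)^N * ((A₀:ℝ)^c * (A₁:ℝ)^(N-c))) * ((f 1:ℝ) + ((b₀:ℝ)+b₁)*(N+1)) := by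
            have hb2 : ((b₀:ℝ)+b₁)*2^N ≤ (2:ℝ)^N*((A₀:ℝ)^c*(A₁:ℝ)^(N-c))*((b₀:ℝ)+b₁) := by
              calc ((b₀:ℝ)+b₁)*2^N = 1 * ((2:ℝ)^N*((b₀:ℝ)+b₁)) := by ring
                _ ≤ ((A₀:ℝ)^c*(A₁:ℝ)^(N-c)) * ((2:ℝ)^N*((b₀:ℝ)+b₁)) :=
                    mul_le_mul_of_nonneg_right hP1R (by positivity)
                _ = (2:ℝ)^N*((A₀:ℝ)^c*(A₁:ℝ)^(N-c))*((b₀:ℝ)+b₁) := by ring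
            nlinarith [hb2]
          have hpb : ((2:ℝ)^N * ((A₀:ℝ)^c * (A₁:ℝ)^(N-c))) / ((A₀:ℝ)+A₁)^N ≤ θ^N := by
            rw [hθdef]
            have h := pow_bound hA0 hlt (r := r) N c (Nat.le_ceil _) hcN
            have hl : (((2^N * (A₀^c * A₁^(N-c)) : ℕ)):ℝ) = (2:ℝ)^N * ((A₀:ℝ)^c * (A₁:ℝ)^(N-c)) := by
              push_cast; ring
            have hr' : ((((A₀+A₁)^N : ℕ)):ℝ) = ((A₀:ℝ)+A₁)^N := by push_cast; ring
            rw [hl, hr'] at h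
            exact h
          calc ((2:ℝ)^N * ((A₀:ℝ)^c * (A₁:ℝ)^(N-c) * ((f 1:ℝ) + ((b₀:ℝ)+b₁)*N))
                + ((b₀:ℝ)+b₁)*2^N) / ((A₀:ℝ)+A₁)^N
              ≤ (((2:ℝ)^N * ((A₀:ℝ)^c * (A₁:ℝ)^(N-c))) * ((f 1:ℝ) + ((b₀:ℝ)+b₁)*(N+1)))
                / ((A₀:ℝ)+A₁)^N := by gcongr
            _ = ((f 1:ℝ) + ((b₀:ℝ)+b₁)*(N+1)) *
                (((2:ℝ)^N * ((A₀:ℝ)^c * (A₁:ℝ)^(N-c))) / ((A₀:ℝ)+A₁)^N) := by ring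
            _ ≤ ((f 1:ℝ) + ((b₀:ℝ)+b₁)*(N+1)) * θ^N := mul_le_mul_of_nonneg_left hpb hC0
            _ = ((f 1 : ℝ) + ((b₀:ℝ)+b₁)*(N+1)) * θ^N := rfl
        · -- gap term
          have h2N : (1:ℝ) ≤ (2:ℝ)^N := one_le_pow₀ (by norm_num)
          rw [← mul_div_assoc]
          gcongr ?_ / _
          nlinarith [le_mul_of_one_le_left
            (show (0:ℝ) ≤ ((b₀:ℝ)+b₁)*2^M₀ by positivity) h2N]
      -- combine portmanteau with the uniform bound
      have hliminf : atTop.liminf (fun M => ghostApprox f M U) ≤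
          ENNReal.ofReal (((f 1 : ℝ) + (b₀+b₁)*(N+1)) * θ^N +
          (2:ℝ)^N * (((A₁:ℝ)^M₀ * ((f 1:ℝ) + (b₀+b₁)*M₀) + (b₀+b₁)*2^M₀) / ((A₀:ℝ)+A₁)^M₀)) :=
        liminf_le_of_frequently_le' ((eventually_atTop.mpr ⟨M₀, hbound⟩).frequently)
      calc μ G ≤ μ U := measure_mono hGU
        _ ≤ _ := hport
        _ ≤ _ := hliminf
    -- let M₀ → ∞
    have hγ : Tendsto (fun M₀ : ℕ =>
        (2:ℝ)^N * (((A₁:ℝ)^M₀ * ((f 1:ℝ) + (b₀+b₁)*M₀) + (b₀+b₁)*2^M₀) / ((A₀:ℝ)+A₁)^M₀))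
        atTop (𝓝 0) := by
      have hA1s : (A₁:ℝ)/((A₀:ℝ)+A₁) < 1 := by
        rw [div_lt_one hsR]
        have : (A₁:ℝ) < (A₀:ℝ) + A₁ := by
          have h0 : (1:ℝ) ≤ (A₀:ℝ) := by exact_mod_cast hA0
          linarith
        exact this
      have hA1s0 : 0 ≤ (A₁:ℝ)/((A₀:ℝ)+A₁) := by positivity
      have h2s : (2:ℝ)/((A₀:ℝ)+A₁) < 1 := by
        rw [div_lt_one hsR]
        have : (3:ℝ) ≤ (A₀:ℝ) + A₁ := by exact_mod_cast hs3
        linarith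
      have h2s0 : 0 ≤ (2:ℝ)/((A₀:ℝ)+A₁) := by positivity
      have t1 : Tendsto (fun M₀ : ℕ =>
          ((f 1:ℝ) + (b₀+b₁)*M₀) * ((A₁:ℝ)/((A₀:ℝ)+A₁))^M₀) atTop (𝓝 0) :=
        poly_geom_decay _ _ _ hA1s0 hA1s
      have t2 : Tendsto (fun M₀ : ℕ => ((b₀+b₁:ℝ)) * ((2:ℝ)/((A₀:ℝ)+A₁))^M₀) atTop (𝓝 0) := by
        have := (tendsto_pow_atTop_nhds_zero_of_lt_one h2s0 h2s).const_mul ((b₀+b₁:ℝ))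
        simpa using this
      have t3 := ((t1.add t2).const_mul ((2:ℝ)^N))
      simp only [mul_zero, add_zero] at t3
      apply t3.congr
      intro M₀
      have hspow : ((A₀:ℝ)+A₁)^M₀ ≠ 0 := by positivity
      rw [div_pow, div_pow]
      field_simp
    have hconv : Tendsto (fun M₀ : ℕ => ENNReal.ofReal (((f 1 : ℝ) + (b₀+b₁)*(N+1)) * θ^N +
          (2:ℝ)^N * (((A₁:ℝ)^M₀ * ((f 1:ℝ) + (b₀+b₁)*M₀) + (b₀+b₁)*2^M₀) / ((A₀:ℝ)+A₁)^M₀)))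
        atTop (𝓝 (ENNReal.ofReal (((f 1 : ℝ) + (b₀+b₁)*(N+1)) * θ^N))) := by
      have hconst : Tendsto (fun _ : ℕ => ((f 1 : ℝ) + (b₀+b₁)*(N+1)) * θ^N) atTop
          (𝓝 (((f 1 : ℝ) + (b₀+b₁)*(N+1)) * θ^N)) := tendsto_const_nhds
      have := ENNReal.tendsto_ofReal (hconst.add hγ)
      simpa using this
    exact ge_of_tendsto hconv (eventually_atTop.mpr ⟨N, hM₀bound⟩)
  -- let N → ∞
  have hdecay : Tendsto (fun N : ℕ => ENNReal.ofReal (((f 1:ℝ) + (b₀+b₁)*(N+1)) * θ^N))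
      atTop (𝓝 0) := by
    have h0 := poly_geom_decay ((f 1:ℝ) + (b₀+b₁)) ((b₀+b₁:ℝ)) θ hθ0.le hθ1
    have h2 : Tendsto (fun N : ℕ => ((f 1:ℝ) + (b₀+b₁)*(N+1)) * θ^N) atTop (𝓝 0) :=
      h0.congr (fun N => by ring)
    have := ENNReal.tendsto_ofReal h2
    simpa using this
  have hle : μ G ≤ 0 :=
    ge_of_tendsto hdecay (eventually_atTop.mpr ⟨max N₀ 1, fun N hN =>
      main N (le_trans (le_max_left _ _) hN) (le_trans (le_max_right _ _) hN)⟩)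
  exact nonpos_iff_eq_zero.mp hle

end Stmt13

theorem stmt_13 (A₀ A₁ b₀ b₁ : ℕ) (hnz : ¬(A₀ = 0 ∧ A₁ = 0 ∧ b₀ = 0 ∧ b₁ = 0))
    (f : ℕ → ℕ) (hf1 : 1 ≤ f 1)
    (heven : ∀ n, 1 ≤ n → f (2 * n) = A₀ * f n + b₀)
    (hodd : ∀ n, 1 ≤ n → f (2 * n + 1) = A₁ * f n + b₁)
    (hb : 1 ≤ b₀ + b₁) (hA0 : 1 ≤ A₀) (hlt : A₀ < A₁)
    (μ : Measure ℝ) (hμ : IsProbabilityMeasure μ)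
    (hlim : WeakLimit (ghostApprox f) μ) :
    μ {x ∈ Set.Ico (0:ℝ) 1 |
        Real.log (2 * (A₁ : ℝ) / ((A₀ : ℝ) + A₁)) / Real.log ((A₁ : ℝ) / A₀) <
          Filter.liminf (fun i : ℕ =>
            ((((Finset.Icc 1 i).filter fun j => ⌊(2:ℝ) ^ j * x⌋ % 2 = 0).card : ℝ) / i)) atTop} =
      0 := by
  classical
  set S : ℚ × ℕ → Set ℝ := fun p =>
    if Real.log (2 * (A₁ : ℝ) / ((A₀ : ℝ) + A₁)) / Real.log ((A₁ : ℝ) / A₀) < (p.1:ℝ)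
        ∧ (p.1:ℝ) < 1 then
      {x ∈ Set.Ico (0:ℝ) 1 |
        ∀ N, p.2 ≤ N → (p.1:ℝ) * N < (Stmt13.zc (⌊(2:ℝ)^N * x⌋.toNat) N : ℝ)}
    else ∅ with hS
  have hzero : ∀ p, μ (S p) = 0 := by
    intro p
    rw [hS]
    dsimp only
    by_cases h : Real.log (2 * (A₁ : ℝ) / ((A₀ : ℝ) + A₁)) / Real.log ((A₁ : ℝ) / A₀) < (p.1:ℝ)
        ∧ (p.1:ℝ) < 1
    · rw [if_pos h]
      exact Stmt13.measure_G_zero A₀ A₁ b₀ b₁ f hf1 heven hodd hb hA0 hlt μ hμ hlim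
        (p.1:ℝ) h.1 h.2 p.2
    · rw [if_neg h]
      exact measure_empty
  have hsub : {x ∈ Set.Ico (0:ℝ) 1 |
        Real.log (2 * (A₁ : ℝ) / ((A₀ : ℝ) + A₁)) / Real.log ((A₁ : ℝ) / A₀) <
          Filter.liminf (fun i : ℕ =>
            ((((Finset.Icc 1 i).filter fun j => ⌊(2:ℝ) ^ j * x⌋ % 2 = 0).card : ℝ) / i)) atTop}
      ⊆ ⋃ p : ℚ × ℕ, S p := by
    intro x hx
    obtain ⟨hxI, hxl⟩ := hx
    have hub : ∀ i : ℕ,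
        ((((Finset.Icc 1 i).filter fun j => ⌊(2:ℝ) ^ j * x⌋ % 2 = 0).card : ℝ) / i) ≤ 1 := by
      intro i
      rcases Nat.eq_zero_or_pos i with hi | hi
      · subst hi; norm_num
      · have hcard : (((Finset.Icc 1 i).filter fun j => ⌊(2:ℝ) ^ j * x⌋ % 2 = 0).card : ℝ)
            ≤ (i:ℝ) := by
          have h1 : ((Finset.Icc 1 i).filter fun j => ⌊(2:ℝ) ^ j * x⌋ % 2 = 0).card
              ≤ (Finset.Icc 1 i).card := Finset.card_filter_le _ _
          have h2 : (Finset.Icc 1 i).card = i := by rw [Nat.card_Icc]; omega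
          have := le_trans h1 (le_of_eq h2)
          exact_mod_cast this
        rw [div_le_one (by exact_mod_cast hi)]
        exact hcard
    have hlb : ∀ i : ℕ,
        (0:ℝ) ≤ ((((Finset.Icc 1 i).filter fun j => ⌊(2:ℝ) ^ j * x⌋ % 2 = 0).card : ℝ) / i) := by
      intro i
      positivity
    have hbd1 : atTop.IsBoundedUnder (· ≤ ·) (fun i : ℕ =>
        ((((Finset.Icc 1 i).filter fun j => ⌊(2:ℝ) ^ j * x⌋ % 2 = 0).card : ℝ) / i)) :=
      Filter.isBoundedUnder_of ⟨1, hub⟩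
    have hbd2 : atTop.IsBoundedUnder (· ≥ ·) (fun i : ℕ =>
        ((((Finset.Icc 1 i).filter fun j => ⌊(2:ℝ) ^ j * x⌋ % 2 = 0).card : ℝ) / i)) :=
      Filter.isBoundedUnder_of ⟨0, hlb⟩
    have hliminf1 : Filter.liminf (fun i : ℕ =>
        ((((Finset.Icc 1 i).filter fun j => ⌊(2:ℝ) ^ j * x⌋ % 2 = 0).card : ℝ) / i)) atTop ≤ 1 :=
      Filter.liminf_le_of_frequently_le ((Filter.Eventually.of_forall hub).frequently) hbd2
    obtain ⟨q, hq1, hq2⟩ := exists_rat_btwn hxl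
    have hq3 : (q:ℝ) < 1 := lt_of_lt_of_le hq2 hliminf1
    have hev := Filter.eventually_lt_of_lt_liminf hq2 hbd2
    obtain ⟨N₁, hN₁⟩ := Filter.eventually_atTop.mp hev
    refine Set.mem_iUnion.mpr ⟨(q, max N₁ 1), ?_⟩
    rw [hS]
    dsimp only
    rw [if_pos ⟨hq1, hq3⟩]
    refine ⟨hxI, ?_⟩
    intro N hN
    have hN1 : 1 ≤ N := le_trans (le_max_right _ _) hN
    have hNN₁ : N₁ ≤ N := le_trans (le_max_left _ _) hN
    have hu := hN₁ N hNN₁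
    have hNpos : (0:ℝ) < (N:ℝ) := by exact_mod_cast hN1
    have hqN : (q:ℝ) * N <
        (((Finset.Icc 1 N).filter fun j => ⌊(2:ℝ) ^ j * x⌋ % 2 = 0).card : ℝ) := by
      rw [lt_div_iff₀ hNpos] at hu
      exact hu
    have hcz := Stmt13.count_eq_zc x hxI.1 N
    rw [hcz] at hqN
    exact hqN
  refine le_antisymm ?_ zero_le
  calc μ {x ∈ Set.Ico (0:ℝ) 1 |
        Real.log (2 * (A₁ : ℝ) / ((A₀ : ℝ) + A₁)) / Real.log ((A₁ : ℝ) / A₀) <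
          Filter.liminf (fun i : ℕ =>
            ((((Finset.Icc 1 i).filter fun j => ⌊(2:ℝ) ^ j * x⌋ % 2 = 0).card : ℝ) / i)) atTop}
      ≤ μ (⋃ p : ℚ × ℕ, S p) := measure_mono hsub
    _ ≤ ∑' p : ℚ × ℕ, μ (S p) := measure_iUnion_le _
    _ = 0 := by simp [hzero]
end

section
/- Assume b₀ + b₁ ≥ 1, A₁ = 0 and A := A₀ ≥ 3, and let μ be the ghost measure of f. Set σ(∞) = f(1) + (b₀+b₁)/(A−2). Then μ({0}) = (f(1) + b₀/(A−1)) / σ(∞), and for every dyadic rational x = m/2^n ∈ (0,1) with m odd and n ≥ 1, μ({x}) = (1/σ(∞)) · ( b₁/A^n + b₀/(A^n·(A−1)) ). -/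
open MeasureTheory Filter Topology

section AuxCombinatorial
open Finset


/-- value of f at points of 2-adic valuation `v`. -/
def Wv (A₀ b₀ b₁ v : ℕ) : ℕ := A₀ ^ v * b₁ + b₀ * ∑ i ∈ range v, A₀ ^ i

lemma Wv_succ (A₀ b₀ b₁ v : ℕ) : Wv A₀ b₀ b₁ (v + 1) = A₀ * Wv A₀ b₀ b₁ v + b₀ := by
  simp only [Wv, geom_sum_succ, pow_succ]
  ring

lemma padval_two_pow_mul_odd {v u : ℕ} (hu : Odd u) : padicValNat 2 (2 ^ v * u) = v := by
  have hu0 : u ≠ 0 := by rcases hu with ⟨a, rfl⟩; omega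
  have h2 : ¬ (2 ∣ u) := by rcases hu with ⟨a, rfl⟩; omega
  rw [padicValNat.mul (by positivity) hu0, padicValNat.prime_pow,
    padicValNat.eq_zero_of_not_dvd h2]
  omega

lemma exists_odd_factor {j : ℕ} (hj : 0 < j) : ∃ u, Odd u ∧ j = 2 ^ padicValNat 2 j * u := by
  refine ⟨ordCompl[2] j, ?_, ?_⟩
  · have := Nat.not_dvd_ordCompl Nat.prime_two hj.ne'
    rcases Nat.even_or_odd (ordCompl[2] j) with he | ho
    · exact absurd he.two_dvd this
    · exact ho
  · rw [Nat.factorization_def _ Nat.prime_two] at *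
    exact (Nat.ordProj_mul_ordCompl_eq_self j 2).symm

lemma key_val {j K k : ℕ} (hj : 0 < j) (hdvd : 2 ^ (padicValNat 2 j + 1) ∣ K)
    (hk : 0 < k) (hcase : k = K + j ∨ k + j = K) :
    padicValNat 2 k = padicValNat 2 j := by
  obtain ⟨u, hu, hju⟩ := exists_odd_factor hj
  obtain ⟨w, hw⟩ := hdvd
  set v := padicValNat 2 j with hv
  rcases hcase with h | h
  · have : k = 2 ^ v * (2 * w + u) := by
      subst h hw; rw [pow_succ] at *; nlinarith [hju]
    rw [this, padval_two_pow_mul_odd]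
    rcases hu with ⟨a, ha⟩; exact ⟨w + a, by omega⟩
  · have hK : K = 2 ^ v * (2 * w) := by rw [hw, pow_succ]; ring
    have huw : u < 2 * w := by
      by_contra hc
      push_neg at hc
      have : K ≤ j := by rw [hK, hju]; exact Nat.mul_le_mul_left _ hc
      omega
    have hk2 : k = 2 ^ v * (2 * w - u) := by
      have h2 : k + 2 ^ v * u = 2 ^ v * (2 * w) := by omega
      rw [Nat.mul_sub]
      omega
    rw [hk2, padval_two_pow_mul_odd]
    rcases hu with ⟨a, ha⟩
    exact ⟨w - a - 1, by omega⟩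

/-- The sum of `f` over the fundamental region. -/
def Sf (f : ℕ → ℕ) (N : ℕ) : ℕ := ∑ k ∈ range (2 ^ N), f (2 ^ N + k)

lemma sum_range_two_mul (g : ℕ → ℕ) (n : ℕ) :
    ∑ k ∈ range (2 * n), g k = ∑ j ∈ range n, (g (2 * j) + g (2 * j + 1)) := by
  induction n with
  | zero => simp
  | succ n ih =>
    rw [show 2 * (n + 1) = (2 * n + 1) + 1 by ring, sum_range_succ, sum_range_succ,
      ih, sum_range_succ]
    ring

section f
variable {A₀ A₁ b₀ b₁ : ℕ} {f : ℕ → ℕ}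
variable (heven : ∀ n, 1 ≤ n → f (2 * n) = A₀ * f n + b₀)
variable (hodd : ∀ n, 1 ≤ n → f (2 * n + 1) = A₁ * f n + b₁)
variable (hA₁ : A₁ = 0)

include heven hodd hA₁ in
lemma f_eq_W : ∀ N k, 1 ≤ k → k < 2 ^ N → f (2 ^ N + k) = Wv A₀ b₀ b₁ (padicValNat 2 k) := by
  intro N
  induction N with
  | zero => intro k hk hk'; omega
  | succ N ih =>
    intro k hk hk'
    rcases Nat.even_or_odd k with he | ho
    · obtain ⟨t, rfl⟩ := he
      have ht : 1 ≤ t := by omega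
      have h1 : 2 ^ (N + 1) + (t + t) = 2 * (2 ^ N + t) := by ring
      have h2 : f (2 ^ (N+1) + (t+t)) = A₀ * f (2 ^ N + t) + b₀ := by
        rw [h1]; exact heven _ (by omega)
      have hv : padicValNat 2 (t + t) = padicValNat 2 t + 1 := by
        have : t + t = 2 * t := by ring
        rw [this, padicValNat.mul (by norm_num) (by omega), padicValNat.self (by norm_num)]
        omega
      rw [h2, hv, Wv_succ, ih t ht (by omega)]
    · obtain ⟨t, rfl⟩ := ho
      have h1 : 2 ^ (N + 1) + (2 * t + 1) = 2 * (2 ^ N + t) + 1 := by ring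
      have h2 : f (2 ^ (N+1) + (2*t+1)) = A₁ * f (2 ^ N + t) + b₁ := by
        rw [h1]; exact hodd _ (by omega)
      have hv : padicValNat 2 (2 * t + 1) = 0 :=
        padicValNat.eq_zero_of_not_dvd (by omega)
      rw [h2, hA₁, hv]
      simp [Wv]

include heven hodd hA₁ in
lemma f_shift {M N k : ℕ} (hMN : M ≤ N) (hk : 1 ≤ k) (hk' : k < 2 ^ M) :
    f (2 ^ N + k) = f (2 ^ M + k) := by
  rw [f_eq_W heven hodd hA₁ N k hk (lt_of_lt_of_le hk' (Nat.pow_le_pow_right (by norm_num) hMN)),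
    f_eq_W heven hodd hA₁ M k hk hk']

include heven hodd hA₁ in
lemma Sf_succ (N : ℕ) : Sf f (N + 1) = A₀ * Sf f N + 2 ^ N * (b₀ + b₁) := by
  have hpos : ∀ j : ℕ, 1 ≤ 2 ^ N + j := by
    intro j; have : 0 < (2:ℕ) ^ N := by positivity
    omega
  have h : ∀ j, 2 ^ (N + 1) + 2 * j = 2 * (2 ^ N + j) := by intro j; ring
  have h' : ∀ j, 2 ^ (N + 1) + (2 * j + 1) = 2 * (2 ^ N + j) + 1 := by intro j; ring
  calc Sf f (N + 1) = ∑ k ∈ range (2 * 2 ^ N), f (2 ^ (N + 1) + k) := by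
        rw [Sf, pow_succ, Nat.mul_comm (2 ^ N) 2]
    _ = ∑ j ∈ range (2 ^ N), (f (2 ^ (N + 1) + 2 * j) + f (2 ^ (N + 1) + (2 * j + 1))) := by
        rw [sum_range_two_mul (fun k => f (2 ^ (N + 1) + k))]
    _ = ∑ j ∈ range (2 ^ N), (A₀ * f (2 ^ N + j) + (b₀ + b₁)) := by
        refine sum_congr rfl fun j _ => ?_
        rw [h j, h' j, heven _ (hpos j), hodd _ (hpos j), hA₁]
        ring
    _ = A₀ * Sf f N + 2 ^ N * (b₀ + b₁) := by
        rw [sum_add_distrib, ← mul_sum, sum_const, card_range, smul_eq_mul, Sf]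

include heven in
lemma f_pow_ge (hf1 : 1 ≤ f 1) (hA₀ : 1 ≤ A₀) : ∀ N, 1 ≤ f (2 ^ N) := by
  intro N
  induction N with
  | zero => simpa using hf1
  | succ N ih =>
    have h2 : (2 : ℕ) ^ (N + 1) = 2 * 2 ^ N := by ring
    rw [h2, heven _ Nat.one_le_two_pow]
    have := Nat.mul_le_mul hA₀ ih
    omega

include heven in
lemma Sf_pos (hf1 : 1 ≤ f 1) (hA₀ : 1 ≤ A₀) (N : ℕ) : 1 ≤ Sf f N := by
  have h0 : 0 ∈ range (2 ^ N) := mem_range.2 (by positivity)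
  calc 1 ≤ f (2 ^ N + 0) := by simpa using f_pow_ge heven hf1 hA₀ N
    _ ≤ Sf f N := single_le_sum (f := fun k => f (2 ^ N + k)) (fun i _ => Nat.zero_le _) h0

include heven hodd hA₁ in
lemma err_core {n m p N : ℕ} (hn : 1 ≤ n) (hm : Odd m) (hmlt : m < 2 ^ n)
    (hp : n < p) (hpN : p ≤ N) :
    ∑ k ∈ (range (2 ^ N)).filter (fun k => k ≠ m * 2 ^ (N - n) ∧
        k < m * 2 ^ (N - n) + 2 ^ (N - p) ∧ m * 2 ^ (N - n) < k + 2 ^ (N - p)),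
      f (2 ^ N + k) ≤ 2 * Sf f (N - p) := by
  set M := N - p with hM
  set k₀ := m * 2 ^ (N - n) with hk₀
  set B := (range (2 ^ N)).filter (fun k => k ≠ k₀ ∧ k < k₀ + 2 ^ M ∧ k₀ < k + 2 ^ M) with hB
  have hMsub : M + 1 ≤ N - n := by omega
  have hk₀ge : 2 ^ (M + 1) ≤ k₀ := by
    calc 2 ^ (M + 1) ≤ 2 ^ (N - n) := Nat.pow_le_pow_right (by norm_num) hMsub
      _ ≤ m * 2 ^ (N - n) := Nat.le_mul_of_pos_left _ (by rcases hm with ⟨a, rfl⟩; omega)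
  have hMM : 2 ^ (M + 1) = 2 * 2 ^ M := by ring
  have key : ∀ k ∈ B, ∀ j, (j = k - k₀ ∧ k₀ < k) ∨ (j = k₀ - k ∧ k < k₀) →
      1 ≤ j ∧ j < 2 ^ M ∧ f (2 ^ N + k) = f (2 ^ M + j) := by
    intro k hk j hj
    simp only [hB, mem_filter, mem_range] at hk
    obtain ⟨hkr, hkne, hkub, hklb⟩ := hk
    have hjpos : 1 ≤ j := by omega
    have hjlt : j < 2 ^ M := by omega
    have hkpos : 0 < k := by omega
    have hvj : padicValNat 2 j < M := by
      have hle : 2 ^ padicValNat 2 j ≤ j := Nat.le_of_dvd (by omega) pow_padicValNat_dvd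
      by_contra hc
      push_neg at hc
      have h2 : 2 ^ M ≤ 2 ^ padicValNat 2 j := Nat.pow_le_pow_right (by norm_num) hc
      omega
    have hdvdk₀ : 2 ^ (padicValNat 2 j + 1) ∣ k₀ := by
      refine Dvd.dvd.mul_left ?_ m
      exact pow_dvd_pow 2 (by omega)
    have hval : padicValNat 2 k = padicValNat 2 j :=
      key_val hjpos hdvdk₀ hkpos (by omega)
    refine ⟨hjpos, hjlt, ?_⟩
    rw [f_eq_W heven hodd hA₁ N k hkpos hkr, f_eq_W heven hodd hA₁ M j hjpos hjlt, hval]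
  have hsplit : B = B.filter (fun k => k₀ < k) ∪ B.filter (fun k => k < k₀) := by
    ext k
    simp only [mem_union, mem_filter, hB, mem_range]
    constructor
    · intro h; rcases lt_or_gt_of_ne h.2.1 with h' | h'
      · right; exact ⟨⟨h.1, h.2⟩, h'⟩
      · left; exact ⟨⟨h.1, h.2⟩, h'⟩
    · rintro (⟨h, _⟩ | ⟨h, _⟩) <;> exact h
  have hdisj : Disjoint (B.filter (fun k => k₀ < k)) (B.filter (fun k => k < k₀)) :=
    disjoint_filter.2 fun x _ h1 h2 => by omega
  have hup : ∑ k ∈ B.filter (fun k => k₀ < k), f (2 ^ N + k) ≤ Sf f M := by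
    have himg : ∀ k ∈ B.filter (fun k => k₀ < k), f (2 ^ N + k) = f (2 ^ M + (k - k₀)) := by
      intro k hk
      simp only [mem_filter] at hk
      exact (key k hk.1 (k - k₀) (Or.inl ⟨rfl, hk.2⟩)).2.2
    rw [sum_congr rfl himg]
    have hinj : ∀ x ∈ B.filter (fun k => k₀ < k), ∀ y ∈ B.filter (fun k => k₀ < k),
        x - k₀ = y - k₀ → x = y := by
      intro a ha b hb hab
      simp only [mem_filter] at ha hb
      omega
    have himage := Finset.sum_image (f := fun j => f (2 ^ M + j)) hinj
    rw [← himage]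
    refine sum_le_sum_of_subset ?_
    intro j hj
    simp only [mem_image, mem_filter] at hj
    obtain ⟨k, ⟨hkB, hkgt⟩, rfl⟩ := hj
    exact mem_range.2 (key k hkB (k - k₀) (Or.inl ⟨rfl, hkgt⟩)).2.1
  have hlo : ∑ k ∈ B.filter (fun k => k < k₀), f (2 ^ N + k) ≤ Sf f M := by
    have himg : ∀ k ∈ B.filter (fun k => k < k₀), f (2 ^ N + k) = f (2 ^ M + (k₀ - k)) := by
      intro k hk
      simp only [mem_filter] at hk
      exact (key k hk.1 (k₀ - k) (Or.inr ⟨rfl, hk.2⟩)).2.2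
    rw [sum_congr rfl himg]
    have hinj : ∀ x ∈ B.filter (fun k => k < k₀), ∀ y ∈ B.filter (fun k => k < k₀),
        k₀ - x = k₀ - y → x = y := by
      intro a ha b hb hab
      simp only [mem_filter] at ha hb
      omega
    have himage := Finset.sum_image (f := fun j => f (2 ^ M + j)) hinj
    rw [← himage]
    refine sum_le_sum_of_subset ?_
    intro j hj
    simp only [mem_image, mem_filter] at hj
    obtain ⟨k, ⟨hkB, hklt⟩, rfl⟩ := hj
    exact mem_range.2 (key k hkB (k₀ - k) (Or.inr ⟨rfl, hklt⟩)).2.1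
  calc ∑ k ∈ B, f (2 ^ N + k)
      = ∑ k ∈ B.filter (fun k => k₀ < k), f (2 ^ N + k)
        + ∑ k ∈ B.filter (fun k => k < k₀), f (2 ^ N + k) := by
        rw [← sum_union hdisj, ← hsplit]
    _ ≤ Sf f M + Sf f M := Nat.add_le_add hup hlo
    _ = 2 * Sf f M := by ring

end f

end AuxCombinatorial

section AuxAnalytic
open Finset Metric

/-- Tent function of height 1 at `x` with half-width `2⁻ᵖ`. -/
noncomputable def tent (x : ℝ) (p : ℕ) : BoundedContinuousFunction ℝ ℝ :=
  BoundedContinuousFunction.mkOfBound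
    ⟨fun y => max 0 (1 - 2 ^ p * |y - x|),
      continuous_const.max (by continuity)⟩ 1
    (by
      intro a b
      have h1 : ∀ y : ℝ, 0 ≤ max 0 (1 - 2 ^ p * |y - x|) := fun y => le_max_left _ _
      have h2 : ∀ y : ℝ, max 0 (1 - 2 ^ p * |y - x|) ≤ 1 := by
        intro y
        refine max_le (by norm_num) ?_
        have : (0:ℝ) ≤ 2 ^ p * |y - x| := by positivity
        linarith
      rw [Real.dist_eq]
      have := h1 a; have := h2 a; have := h1 b; have := h2 b
      rw [abs_le]
      constructor <;> simp only [ContinuousMap.coe_mk] <;> linarith)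

lemma tent_apply (x : ℝ) (p : ℕ) (y : ℝ) : tent x p y = max 0 (1 - 2 ^ p * |y - x|) := rfl

lemma tent_self (x : ℝ) (p : ℕ) : tent x p x = 1 := by
  simp [tent_apply]

lemma tent_nonneg (x : ℝ) (p : ℕ) (y : ℝ) : 0 ≤ tent x p y := le_max_left _ _

lemma tent_le_one (x : ℝ) (p : ℕ) (y : ℝ) : tent x p y ≤ 1 := by
  rw [tent_apply]
  refine max_le (by norm_num) ?_
  have : (0:ℝ) ≤ 2 ^ p * |y - x| := by positivity
  linarith

lemma tent_eq_zero {x : ℝ} {p : ℕ} {y : ℝ} (h : ((2:ℝ) ^ p)⁻¹ ≤ |y - x|) : tent x p y = 0 := by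
  rw [tent_apply, max_eq_left]
  have h2 : (1:ℝ) ≤ 2 ^ p * |y - x| := by
    have hp : (0:ℝ) < 2 ^ p := by positivity
    calc (1:ℝ) = 2 ^ p * ((2:ℝ) ^ p)⁻¹ := by field_simp
      _ ≤ 2 ^ p * |y - x| := by exact mul_le_mul_of_nonneg_left h hp.le
  linarith

lemma indicator_le_tent (x : ℝ) (p : ℕ) (y : ℝ) :
    Set.indicator {x} (fun _ => (1:ℝ)) y ≤ tent x p y := by
  rcases eq_or_ne y x with rfl | h
  · simp [tent_self]
  · rw [Set.indicator_of_notMem (by simpa using h)]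
    exact tent_nonneg x p y

lemma tent_le_indicator (x : ℝ) (p : ℕ) (y : ℝ) :
    tent x p y ≤ Set.indicator (closedBall x ((2:ℝ)^p)⁻¹) (fun _ => (1:ℝ)) y := by
  by_cases h : y ∈ closedBall x ((2:ℝ)^p)⁻¹
  · rw [Set.indicator_of_mem h]
    exact tent_le_one x p y
  · rw [Set.indicator_of_notMem h, tent_eq_zero]
    simp only [mem_closedBall, Real.dist_eq, not_le] at h
    exact h.le

lemma point_mass_of_weaklim (μ : Measure ℝ) [IsProbabilityMeasure μ] (μs : ℕ → Measure ℝ)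
    (hlim : WeakLimit μs μ) (x L : ℝ) (w E : ℕ → ℝ)
    (hw : Tendsto w atTop (𝓝 L)) (hE : Tendsto E atTop (𝓝 0))
    (hbd : ∀ᶠ p in atTop, ∀ᶠ N in atTop,
      w N ≤ ∫ y, tent x p y ∂(μs N) ∧ ∫ y, tent x p y ∂(μs N) ≤ w N + E p) :
    μ {x} = ENNReal.ofReal L := by
  have hfin : μ {x} ≠ ⊤ := measure_ne_top μ _
  -- the integral of tent p against μ is squeezed
  have hsq : ∀ᶠ p in atTop,
      L ≤ ∫ y, tent x p y ∂μ ∧ ∫ y, tent x p y ∂μ ≤ L + E p := by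
    filter_upwards [hbd] with p hp
    have hconv := hlim (tent x p)
    constructor
    · refine le_of_tendsto_of_tendsto hw hconv ?_
      filter_upwards [hp] with N hN using hN.1
    · refine le_of_tendsto_of_tendsto hconv (hw.add_const (E p)) ?_
      filter_upwards [hp] with N hN using hN.2
  have hind : ∫ y, Set.indicator {x} (fun _ => (1:ℝ)) y ∂μ = (μ {x}).toReal := by
    rw [MeasureTheory.integral_indicator (measurableSet_singleton x)]
    simp
  have htentint : ∀ p, Integrable (fun y => tent x p y) μ := fun p =>
    (tent x p).integrable μ
  -- upper bound for μ {x}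
  have hub : (μ {x}).toReal ≤ L := by
    refine ge_of_tendsto (by simpa using hE.const_add L) ?_
    filter_upwards [hsq] with p hp
    calc (μ {x}).toReal = ∫ y, Set.indicator {x} (fun _ => (1:ℝ)) y ∂μ := hind.symm
      _ ≤ ∫ y, tent x p y ∂μ :=
          integral_mono ((integrable_const (1:ℝ)).indicator (measurableSet_singleton x))
            (htentint p) (indicator_le_tent x p)
      _ ≤ L + E p := hp.2
  -- lower bound for μ {x}
  have hball : Tendsto (fun p => μ (closedBall x ((2:ℝ)^p)⁻¹)) atTop (𝓝 (μ {x})) := by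
    have hInter : ⋂ p : ℕ, closedBall x ((2:ℝ)^p)⁻¹ = {x} := by
      ext y
      simp only [Set.mem_iInter, mem_closedBall, Set.mem_singleton_iff]
      constructor
      · intro h
        have hto : Tendsto (fun p : ℕ => ((2:ℝ)^p)⁻¹) atTop (𝓝 0) := by
          simp_rw [← inv_pow]
          exact tendsto_pow_atTop_nhds_zero_of_lt_one (by norm_num) (by norm_num)
        have h0 : dist y x ≤ 0 := ge_of_tendsto hto (Filter.Eventually.of_forall h)
        have := dist_nonneg (x := y) (y := x)
        have : dist y x = 0 := le_antisymm h0 this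
        exact dist_eq_zero.mp this
      · rintro rfl
        intro p
        simp [dist_self]

    have := MeasureTheory.tendsto_measure_iInter_atTop (μ := μ)
      (s := fun p : ℕ => closedBall x ((2:ℝ)^p)⁻¹)
      (fun p => (measurableSet_closedBall).nullMeasurableSet)
      (fun p q hpq => closedBall_subset_closedBall (by
        have h2 : (2:ℝ) ^ p ≤ 2 ^ q := pow_le_pow_right₀ (by norm_num) hpq
        exact inv_anti₀ (by positivity) h2))
      ⟨0, measure_ne_top μ _⟩
    rwa [hInter] at this
  have hlb : L ≤ (μ {x}).toReal := by
    have htoreal : Tendsto (fun p => (μ (closedBall x ((2:ℝ)^p)⁻¹)).toReal) atTop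
        (𝓝 ((μ {x}).toReal)) := by
      exact (ENNReal.tendsto_toReal hfin).comp hball
    refine ge_of_tendsto htoreal ?_
    filter_upwards [hsq] with p hp
    calc L ≤ ∫ y, tent x p y ∂μ := hp.1
      _ ≤ ∫ y, Set.indicator (closedBall x ((2:ℝ)^p)⁻¹) (fun _ => (1:ℝ)) y ∂μ :=
          integral_mono (htentint p)
            ((integrable_const (1:ℝ)).indicator measurableSet_closedBall)
            (tent_le_indicator x p)
      _ = (μ (closedBall x ((2:ℝ)^p)⁻¹)).toReal := by
          rw [MeasureTheory.integral_indicator measurableSet_closedBall]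
          simp
          rfl
  have : (μ {x}).toReal = L := le_antisymm hub hlb
  rw [← this, ENNReal.ofReal_toReal hfin]


lemma integral_ghostApprox (f : ℕ → ℕ) (N : ℕ) (g : BoundedContinuousFunction ℝ ℝ) :
    ∫ y, g y ∂(ghostApprox f N)
      = ((∑ k ∈ range (2 ^ N), f (2 ^ N + k) : ℕ) : ℝ)⁻¹
        * ∑ k ∈ range (2 ^ N), (f (2 ^ N + k) : ℝ) * g ((k : ℝ) / 2 ^ N) := by
  have hint : ∀ k ∈ range (2 ^ N),
      Integrable (fun y => g y) ((f (2 ^ N + k) : ENNReal) • Measure.dirac ((k : ℝ) / 2 ^ N)) := by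
    intro k _
    haveI : IsFiniteMeasure ((f (2 ^ N + k) : ENNReal) • Measure.dirac ((k : ℝ) / 2 ^ N)) := by
      constructor
      simp only [Measure.smul_apply, smul_eq_mul]
      exact ENNReal.mul_lt_top (by simp) (by simp)
    exact g.integrable _
  rw [ghostApprox, integral_smul_measure, integral_finset_sum_measure hint]
  have hterm : ∀ k ∈ range (2 ^ N),
      ∫ y, g y ∂((f (2 ^ N + k) : ENNReal) • Measure.dirac ((k : ℝ) / 2 ^ N))
        = (f (2 ^ N + k) : ℝ) * g ((k : ℝ) / 2 ^ N) := by
    intro k _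
    rw [integral_smul_measure, integral_dirac]
    simp [smul_eq_mul]
  rw [sum_congr rfl hterm]
  have hcast : (∑ n ∈ range (2 ^ N), (f (2 ^ N + n) : ENNReal))
      = ((∑ k ∈ range (2 ^ N), f (2 ^ N + k) : ℕ) : ENNReal) := by
    rw [Nat.cast_sum]
  congr 1
  rw [ENNReal.toReal_inv, hcast, ENNReal.toReal_natCast]

end AuxAnalytic

section AuxReal
open Finset

lemma pow_div_pow_eq {A : ℝ} (hA : A ≠ 0) {n N : ℕ} (h : n ≤ N) :
    A ^ (N - n) / A ^ N = (A ^ n)⁻¹ := by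
  rw [← pow_sub_mul_pow A h]
  exact div_mul_cancel_left₀ (pow_ne_zero _ hA) _

variable {A₀ A₁ b₀ b₁ : ℕ} {f : ℕ → ℕ}
variable (heven : ∀ n, 1 ≤ n → f (2 * n) = A₀ * f n + b₀)
variable (hodd : ∀ n, 1 ≤ n → f (2 * n + 1) = A₁ * f n + b₁)
variable (hA₁ : A₁ = 0) (hA₀ : 3 ≤ A₀) (hf1 : 1 ≤ f 1)

include hA₀ in
lemma hA3 : (3:ℝ) ≤ (A₀:ℝ) := by exact_mod_cast hA₀

include heven hodd hA₁ hA₀ in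
lemma Sf_real (N : ℕ) :
    (Sf f N : ℝ) = (A₀:ℝ) ^ N * ((f 1 : ℝ) + ((b₀:ℝ) + b₁) / ((A₀:ℝ) - 2))
      - 2 ^ N * (((b₀:ℝ) + b₁) / ((A₀:ℝ) - 2)) := by
  have hA := hA3 hA₀
  have hA2 : (A₀:ℝ) - 2 ≠ 0 := by linarith
  induction N with
  | zero => simp [Sf]
  | succ N ih =>
    have h := Sf_succ heven hodd hA₁ N
    have hcast : (Sf f (N+1) : ℝ) = (A₀:ℝ) * (Sf f N : ℝ) + 2 ^ N * ((b₀:ℝ) + b₁) := by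
      rw [h]; push_cast; ring
    rw [hcast, ih]
    field_simp
    ring

include heven hA₀ in
lemma f_pow_real (N : ℕ) :
    (f (2 ^ N) : ℝ) = (A₀:ℝ) ^ N * ((f 1 : ℝ) + (b₀:ℝ) / ((A₀:ℝ) - 1))
      - (b₀:ℝ) / ((A₀:ℝ) - 1) := by
  have hA := hA3 hA₀
  have hA1 : (A₀:ℝ) - 1 ≠ 0 := by linarith
  induction N with
  | zero => simp
  | succ N ih =>
    have h2 : (2:ℕ) ^ (N + 1) = 2 * 2 ^ N := by ring
    have hcast : (f (2 ^ (N+1)) : ℝ) = (A₀:ℝ) * (f (2 ^ N) : ℝ) + (b₀:ℝ) := by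
      rw [h2, heven _ Nat.one_le_two_pow]; push_cast; ring
    rw [hcast, ih]
    field_simp
    ring

include heven hodd hA₁ hA₀ in
lemma atomnum_real {n m : ℕ} (hn : 1 ≤ n) (hm : Odd m) (t : ℕ) :
    (f (2 ^ (n + t) + m * 2 ^ t) : ℝ)
      = (A₀:ℝ) ^ t * ((b₁:ℝ) + (b₀:ℝ) / ((A₀:ℝ) - 1)) - (b₀:ℝ) / ((A₀:ℝ) - 1) := by
  have hA := hA3 hA₀
  have hA1 : (A₀:ℝ) - 1 ≠ 0 := by linarith
  induction t with
  | zero =>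
    obtain ⟨n', rfl⟩ : ∃ n', n = n' + 1 := ⟨n - 1, by omega⟩
    obtain ⟨a, rfl⟩ := hm
    have h1 : 2 ^ (n' + 1 + 0) + (2 * a + 1) * 2 ^ 0 = 2 * (2 ^ n' + a) + 1 := by ring
    have hpos : 1 ≤ 2 ^ n' + a := by
      have h0 : 0 < (2:ℕ) ^ n' := by positivity
      omega
    rw [h1, hodd _ hpos, hA₁]
    push_cast; ring
  | succ t ih =>
    have h1 : 2 ^ (n + (t + 1)) + m * 2 ^ (t + 1) = 2 * (2 ^ (n + t) + m * 2 ^ t) := by ring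
    have hpos : 1 ≤ 2 ^ (n + t) + m * 2 ^ t := by
      have : 0 < (2:ℕ) ^ (n + t) := by positivity
      omega
    rw [h1, heven _ hpos]
    push_cast
    rw [ih]
    field_simp
    ring

include hA₀ hf1 in
lemma sigma_pos : 0 < (f 1 : ℝ) + ((b₀:ℝ) + b₁) / ((A₀:ℝ) - 2) := by
  have hA := hA3 hA₀
  have hf : (1:ℝ) ≤ (f 1 : ℝ) := by exact_mod_cast hf1
  have hc : (0:ℝ) ≤ ((b₀:ℝ) + b₁) / ((A₀:ℝ) - 2) := by
    apply div_nonneg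
    · positivity
    · linarith
  linarith

include heven hodd hA₁ hA₀ hf1 in
lemma Sf_ge_pow (N : ℕ) : (A₀:ℝ) ^ N ≤ (Sf f N : ℝ) := by
  have hA := hA3 hA₀
  have hf : (1:ℝ) ≤ (f 1 : ℝ) := by exact_mod_cast hf1
  have hc : (0:ℝ) ≤ ((b₀:ℝ) + b₁) / ((A₀:ℝ) - 2) := by
    apply div_nonneg
    · positivity
    · linarith
  have h2A : (2:ℝ) ^ N ≤ (A₀:ℝ) ^ N := pow_le_pow_left₀ (by norm_num) (by linarith) N
  have hkey : 0 ≤ ((A₀:ℝ) ^ N - 2 ^ N) * (((b₀:ℝ) + b₁) / ((A₀:ℝ) - 2)) :=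
    mul_nonneg (by linarith) hc
  have hpow : (0:ℝ) ≤ (A₀:ℝ) ^ N := by positivity
  rw [Sf_real heven hodd hA₁ hA₀]
  nlinarith

include heven hA₀ in
lemma Sf_pos_real (hf1 : 1 ≤ f 1) (N : ℕ) : (0:ℝ) < (Sf f N : ℝ) := by
  have := Sf_pos heven hf1 (by omega) N
  exact_mod_cast Nat.lt_of_lt_of_le Nat.zero_lt_one this

include heven hodd hA₁ hA₀ hf1 in
lemma err_le {p N : ℕ} (hpN : p ≤ N) :
    2 * (Sf f (N - p) : ℝ) / (Sf f N : ℝ)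
      ≤ 2 * ((f 1 : ℝ) + ((b₀:ℝ) + b₁) / ((A₀:ℝ) - 2)) / (A₀:ℝ) ^ p := by
  have hA := hA3 hA₀
  have hA0 : (A₀:ℝ) ≠ 0 := by linarith
  have hσ := sigma_pos hA₀ hf1 (b₀ := b₀) (b₁ := b₁)
  have hc : (0:ℝ) ≤ ((b₀:ℝ) + b₁) / ((A₀:ℝ) - 2) := by
    apply div_nonneg
    · positivity
    · linarith
  have h1 : (Sf f (N - p) : ℝ) ≤ (A₀:ℝ) ^ (N - p) * ((f 1 : ℝ) + ((b₀:ℝ) + b₁) / ((A₀:ℝ) - 2)) := by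
    rw [Sf_real heven hodd hA₁ hA₀]
    have : (0:ℝ) ≤ 2 ^ (N - p) * (((b₀:ℝ) + b₁) / ((A₀:ℝ) - 2)) := by positivity
    linarith
  have h2 := Sf_ge_pow heven hodd hA₁ hA₀ hf1 (N := N)
  have hpowN : (0:ℝ) < (A₀:ℝ) ^ N := by positivity
  calc 2 * (Sf f (N - p) : ℝ) / (Sf f N : ℝ)
      ≤ 2 * ((A₀:ℝ) ^ (N - p) * ((f 1 : ℝ) + ((b₀:ℝ) + b₁) / ((A₀:ℝ) - 2))) / (A₀:ℝ) ^ N := by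
        apply div_le_div₀ (by positivity) (by linarith) hpowN h2
    _ = 2 * ((f 1 : ℝ) + ((b₀:ℝ) + b₁) / ((A₀:ℝ) - 2)) * ((A₀:ℝ) ^ (N - p) / (A₀:ℝ) ^ N) := by
        ring
    _ = 2 * ((f 1 : ℝ) + ((b₀:ℝ) + b₁) / ((A₀:ℝ) - 2)) / (A₀:ℝ) ^ p := by
        rw [pow_div_pow_eq hA0 hpN]; ring

include hA₀ in
lemma tendsto_E : Tendsto (fun p : ℕ =>
    2 * ((f 1 : ℝ) + ((b₀:ℝ) + b₁) / ((A₀:ℝ) - 2)) / (A₀:ℝ) ^ p) atTop (𝓝 0) := by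
  have hA := hA3 hA₀
  have h0 : Tendsto (fun p : ℕ => ((A₀:ℝ)⁻¹) ^ p) atTop (𝓝 0) :=
    tendsto_pow_atTop_nhds_zero_of_lt_one (by positivity) (by
      rw [inv_lt_one_iff₀]; right; linarith)
  have := h0.const_mul (2 * ((f 1 : ℝ) + ((b₀:ℝ) + b₁) / ((A₀:ℝ) - 2)))
  simp only [mul_zero] at this
  refine this.congr fun p => ?_
  rw [inv_pow]; ring

include heven hodd hA₁ hA₀ hf1 in
lemma tendsto_Sf_div : Tendsto (fun N => (Sf f N : ℝ) / (A₀:ℝ) ^ N) atTop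
    (𝓝 ((f 1 : ℝ) + ((b₀:ℝ) + b₁) / ((A₀:ℝ) - 2))) := by
  have hA := hA3 hA₀
  have hA0 : (A₀:ℝ) ≠ 0 := by linarith
  have hr : Tendsto (fun N : ℕ => ((2:ℝ) / A₀) ^ N) atTop (𝓝 0) :=
    tendsto_pow_atTop_nhds_zero_of_lt_one (by positivity) (by
      rw [div_lt_one (by linarith)]; linarith)
  have h := (hr.const_mul (((b₀:ℝ) + b₁) / ((A₀:ℝ) - 2))).const_sub
    ((f 1 : ℝ) + ((b₀:ℝ) + b₁) / ((A₀:ℝ) - 2))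
  simp only [mul_zero, sub_zero] at h
  refine h.congr fun N => ?_
  have hApow : (A₀:ℝ) ^ N ≠ 0 := by positivity
  rw [Sf_real heven hodd hA₁ hA₀, div_pow, sub_div, mul_div_cancel_left₀ _ hApow]
  ring

include heven hodd hA₁ hA₀ hf1 in
lemma tendsto_zero_atom : Tendsto (fun N => (f (2 ^ N) : ℝ) / (Sf f N : ℝ)) atTop
    (𝓝 (((f 1 : ℝ) + (b₀:ℝ) / ((A₀:ℝ) - 1)) /
      ((f 1 : ℝ) + ((b₀:ℝ) + b₁) / ((A₀:ℝ) - 2)))) := by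
  have hA := hA3 hA₀
  have hA0 : (A₀:ℝ) ≠ 0 := by linarith
  have hσ := sigma_pos hA₀ hf1 (b₀ := b₀) (b₁ := b₁)
  have h1 : Tendsto (fun N => (f (2 ^ N) : ℝ) / (A₀:ℝ) ^ N) atTop
      (𝓝 ((f 1 : ℝ) + (b₀:ℝ) / ((A₀:ℝ) - 1))) := by
    have hr : Tendsto (fun N : ℕ => ((A₀:ℝ)⁻¹) ^ N) atTop (𝓝 0) :=
      tendsto_pow_atTop_nhds_zero_of_lt_one (by positivity) (by
        rw [inv_lt_one_iff₀]; right; linarith)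
    have h := (hr.const_mul ((b₀:ℝ) / ((A₀:ℝ) - 1))).const_sub
      ((f 1 : ℝ) + (b₀:ℝ) / ((A₀:ℝ) - 1))
    simp only [mul_zero, sub_zero] at h
    refine h.congr fun N => ?_
    have hApow : (A₀:ℝ) ^ N ≠ 0 := by positivity
    rw [f_pow_real heven hA₀, sub_div, mul_div_cancel_left₀ _ hApow, inv_pow]
    ring
  have h2 := h1.div (tendsto_Sf_div heven hodd hA₁ hA₀ hf1) (ne_of_gt hσ)
  refine h2.congr fun N => ?_
  have hApow : (A₀:ℝ) ^ N ≠ 0 := by positivity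
  simp only [Pi.div_apply]
  rw [div_div_div_cancel_right₀]
  exact hApow

include heven hodd hA₁ hA₀ hf1 in
lemma tendsto_atom {n m : ℕ} (hn : 1 ≤ n) (hm : Odd m) :
    Tendsto (fun N => (f (2 ^ N + m * 2 ^ (N - n)) : ℝ) / (Sf f N : ℝ)) atTop
      (𝓝 ((((b₁:ℝ) + (b₀:ℝ) / ((A₀:ℝ) - 1)) * ((A₀:ℝ) ^ n)⁻¹) /
        ((f 1 : ℝ) + ((b₀:ℝ) + b₁) / ((A₀:ℝ) - 2)))) := by
  have hA := hA3 hA₀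
  have hA0 : (A₀:ℝ) ≠ 0 := by linarith
  have hσ := sigma_pos hA₀ hf1 (b₀ := b₀) (b₁ := b₁)
  have h1 : Tendsto (fun N => (f (2 ^ N + m * 2 ^ (N - n)) : ℝ) / (A₀:ℝ) ^ N) atTop
      (𝓝 (((b₁:ℝ) + (b₀:ℝ) / ((A₀:ℝ) - 1)) * ((A₀:ℝ) ^ n)⁻¹)) := by
    have hr : Tendsto (fun N : ℕ => ((A₀:ℝ)⁻¹) ^ N) atTop (𝓝 0) :=
      tendsto_pow_atTop_nhds_zero_of_lt_one (by positivity) (by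
        rw [inv_lt_one_iff₀]; right; linarith)
    have h := (hr.const_mul ((b₀:ℝ) / ((A₀:ℝ) - 1))).const_sub
      (((b₁:ℝ) + (b₀:ℝ) / ((A₀:ℝ) - 1)) * ((A₀:ℝ) ^ n)⁻¹)
    simp only [mul_zero, sub_zero] at h
    refine h.congr' ?_
    filter_upwards [eventually_ge_atTop n] with N hnN
    have hNn : n + (N - n) = N := by omega
    have hnum := atomnum_real heven hodd hA₁ hA₀ hn hm (N - n)
    rw [hNn] at hnum
    have e1 : (A₀:ℝ) ^ (N - n) / (A₀:ℝ) ^ N = ((A₀:ℝ) ^ n)⁻¹ := pow_div_pow_eq hA0 hnN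
    calc ((b₁:ℝ) + (b₀:ℝ) / ((A₀:ℝ) - 1)) * ((A₀:ℝ) ^ n)⁻¹
          - (b₀:ℝ) / ((A₀:ℝ) - 1) * ((A₀:ℝ)⁻¹) ^ N
        = ((b₁:ℝ) + (b₀:ℝ) / ((A₀:ℝ) - 1)) * ((A₀:ℝ) ^ (N - n) / (A₀:ℝ) ^ N)
          - (b₀:ℝ) / ((A₀:ℝ) - 1) * ((A₀:ℝ) ^ N)⁻¹ := by rw [e1, inv_pow]
      _ = ((A₀:ℝ) ^ (N - n) * ((b₁:ℝ) + (b₀:ℝ) / ((A₀:ℝ) - 1))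
          - (b₀:ℝ) / ((A₀:ℝ) - 1)) / (A₀:ℝ) ^ N := by ring
      _ = (f (2 ^ N + m * 2 ^ (N - n)) : ℝ) / (A₀:ℝ) ^ N := by rw [hnum]
  have h2 := h1.div (tendsto_Sf_div heven hodd hA₁ hA₀ hf1) (ne_of_gt hσ)
  refine h2.congr fun N => ?_
  have hApow : (A₀:ℝ) ^ N ≠ 0 := by positivity
  simp only [Pi.div_apply]
  rw [div_div_div_cancel_right₀]
  exact hApow

end AuxReal

section AuxMain
open Finset Metric

lemma integral_ghostApprox' (f : ℕ → ℕ) (N : ℕ) (g : BoundedContinuousFunction ℝ ℝ) :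
    ∫ y, g y ∂(ghostApprox f N)
      = ((Sf f N : ℝ))⁻¹ * ∑ k ∈ range (2 ^ N), (f (2 ^ N + k) : ℝ) * g ((k : ℝ) / 2 ^ N) := by
  rw [integral_ghostApprox]
  simp only [Sf]

variable {A₀ A₁ b₀ b₁ : ℕ} {f : ℕ → ℕ}
variable (heven : ∀ n, 1 ≤ n → f (2 * n) = A₀ * f n + b₀)
variable (hodd : ∀ n, 1 ≤ n → f (2 * n + 1) = A₁ * f n + b₁)
variable (hA₁ : A₁ = 0) (hA₀ : 3 ≤ A₀) (hf1 : 1 ≤ f 1)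

include heven hodd hA₁ in
lemma err_core0 {p N : ℕ} (hpN : p ≤ N) :
    ∑ k ∈ (range (2 ^ N)).filter (fun k => k ≠ 0 ∧ k < 2 ^ (N - p)), f (2 ^ N + k)
      ≤ 2 * Sf f (N - p) := by
  have hcongr : ∀ k ∈ (range (2 ^ N)).filter (fun k => k ≠ 0 ∧ k < 2 ^ (N - p)),
      f (2 ^ N + k) = f (2 ^ (N - p) + k) := by
    intro k hk
    simp only [mem_filter, mem_range] at hk
    exact f_shift heven hodd hA₁ (by omega) (by omega) hk.2.2
  rw [sum_congr rfl hcongr]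
  calc ∑ k ∈ (range (2 ^ N)).filter (fun k => k ≠ 0 ∧ k < 2 ^ (N - p)), f (2 ^ (N - p) + k)
      ≤ ∑ k ∈ range (2 ^ (N - p)), f (2 ^ (N - p) + k) := by
        refine sum_le_sum_of_subset fun k hk => ?_
        simp only [mem_filter, mem_range] at hk
        exact mem_range.2 hk.2.2
    _ = Sf f (N - p) := rfl
    _ ≤ 2 * Sf f (N - p) := by omega

include heven hodd hA₁ hA₀ hf1 in
lemma hbd_atom {n m p N : ℕ} (hn : 1 ≤ n) (hm : Odd m) (hmlt : m < 2 ^ n)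
    (hpn : n < p) (hpN : p ≤ N) :
    (f (2 ^ N + m * 2 ^ (N - n)) : ℝ) / (Sf f N : ℝ)
        ≤ ∫ y, tent ((m:ℝ) / 2 ^ n) p y ∂(ghostApprox f N) ∧
      ∫ y, tent ((m:ℝ) / 2 ^ n) p y ∂(ghostApprox f N)
        ≤ (f (2 ^ N + m * 2 ^ (N - n)) : ℝ) / (Sf f N : ℝ)
          + 2 * ((f 1 : ℝ) + ((b₀:ℝ) + b₁) / ((A₀:ℝ) - 2)) / (A₀:ℝ) ^ p := by
  have hnN : n ≤ N := by omega
  have h2N : (0:ℝ) < 2 ^ N := by positivity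
  have hSf : (0:ℝ) < (Sf f N : ℝ) := Sf_pos_real heven hA₀ hf1 N
  have hk₀mem : m * 2 ^ (N - n) ∈ range (2 ^ N) := by
    have h2NN : 2 ^ n * 2 ^ (N - n) = 2 ^ N := by rw [← pow_add]; congr 1; omega
    have hpos : 0 < 2 ^ (N - n) := by positivity
    have hle : (m + 1) * 2 ^ (N - n) ≤ 2 ^ n * 2 ^ (N - n) :=
      Nat.mul_le_mul_right _ (by omega)
    refine mem_range.2 ?_
    have hexp : (m + 1) * 2 ^ (N - n) = m * 2 ^ (N - n) + 2 ^ (N - n) := by ring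
    omega
  have hxcast : ((m * 2 ^ (N - n) : ℕ) : ℝ) / 2 ^ N = (m:ℝ) / 2 ^ n := by
    have h2NNr : (2:ℝ) ^ (N - n) * 2 ^ n = 2 ^ N := pow_sub_mul_pow 2 hnN
    push_cast
    rw [← h2NNr, mul_comm ((m:ℝ)) ((2:ℝ) ^ (N - n)),
      mul_div_mul_left _ _ (by positivity : ((2:ℝ) ^ (N - n)) ≠ 0)]
  have hint := integral_ghostApprox' f N (tent ((m:ℝ) / 2 ^ n) p)
  constructor
  · rw [hint]
    have hterm : ∀ k ∈ range (2 ^ N),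
        (0:ℝ) ≤ (f (2 ^ N + k) : ℝ) * tent ((m:ℝ) / 2 ^ n) p ((k:ℝ) / 2 ^ N) :=
      fun k _ => mul_nonneg (Nat.cast_nonneg _) (tent_nonneg _ _ _)
    have hsingle := single_le_sum hterm hk₀mem
    rw [hxcast, tent_self, mul_one] at hsingle
    calc (f (2 ^ N + m * 2 ^ (N - n)) : ℝ) / (Sf f N : ℝ)
        = (Sf f N : ℝ)⁻¹ * (f (2 ^ N + m * 2 ^ (N - n)) : ℝ) := by rw [inv_mul_eq_div]
      _ ≤ (Sf f N : ℝ)⁻¹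
            * ∑ k ∈ range (2 ^ N), (f (2 ^ N + k) : ℝ) * tent ((m:ℝ) / 2 ^ n) p ((k:ℝ) / 2 ^ N) :=
          mul_le_mul_of_nonneg_left hsingle (inv_nonneg.2 hSf.le)
  · rw [hint]
    have hsum1 : ∑ k ∈ range (2 ^ N), (f (2 ^ N + k) : ℝ) * tent ((m:ℝ) / 2 ^ n) p ((k:ℝ) / 2 ^ N)
        = (f (2 ^ N + m * 2 ^ (N - n)) : ℝ) * 1
          + ∑ k ∈ (range (2 ^ N)).erase (m * 2 ^ (N - n)),
              (f (2 ^ N + k) : ℝ) * tent ((m:ℝ) / 2 ^ n) p ((k:ℝ) / 2 ^ N) := by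
      rw [← Finset.add_sum_erase _ _ hk₀mem, hxcast, tent_self]
    have hsplit := sum_filter_add_sum_filter_not ((range (2 ^ N)).erase (m * 2 ^ (N - n)))
      (fun k => k < m * 2 ^ (N - n) + 2 ^ (N - p) ∧ m * 2 ^ (N - n) < k + 2 ^ (N - p))
      (fun k => (f (2 ^ N + k) : ℝ) * tent ((m:ℝ) / 2 ^ n) p ((k:ℝ) / 2 ^ N))
    have hzero : ∑ k ∈ ((range (2 ^ N)).erase (m * 2 ^ (N - n))).filter
        (fun k => ¬(k < m * 2 ^ (N - n) + 2 ^ (N - p) ∧ m * 2 ^ (N - n) < k + 2 ^ (N - p))),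
        (f (2 ^ N + k) : ℝ) * tent ((m:ℝ) / 2 ^ n) p ((k:ℝ) / 2 ^ N) = 0 := by
      refine sum_eq_zero fun k hk => ?_
      simp only [mem_filter, mem_erase, mem_range] at hk
      obtain ⟨⟨hkne, hkr⟩, hnp⟩ := hk
      have hdist : (2:ℝ) ^ (N - p) ≤ |(k:ℝ) - ((m * 2 ^ (N - n) : ℕ) : ℝ)| := by
        rcases (by omega : m * 2 ^ (N - n) + 2 ^ (N - p) ≤ k ∨ k + 2 ^ (N - p) ≤ m * 2 ^ (N - n))
          with h | h
        · refine le_abs.2 (Or.inl ?_)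
          have hcast : ((m * 2 ^ (N - n) + 2 ^ (N - p) : ℕ) : ℝ) ≤ (k : ℝ) := Nat.cast_le.2 h
          push_cast at hcast ⊢
          linarith
        · refine le_abs.2 (Or.inr ?_)
          have hcast : ((k + 2 ^ (N - p) : ℕ) : ℝ) ≤ ((m * 2 ^ (N - n) : ℕ) : ℝ) := Nat.cast_le.2 h
          push_cast at hcast ⊢
          linarith
      have habs : ((2:ℝ) ^ p)⁻¹ ≤ |(k:ℝ) / 2 ^ N - (m:ℝ) / 2 ^ n| := by
        rw [← hxcast, div_sub_div_same, abs_div, abs_of_pos h2N,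
          ← pow_div_pow_eq (by norm_num : (2:ℝ) ≠ 0) hpN]
        gcongr
      rw [tent_eq_zero habs, mul_zero]
    have hfle : ∑ k ∈ ((range (2 ^ N)).erase (m * 2 ^ (N - n))).filter
        (fun k => k < m * 2 ^ (N - n) + 2 ^ (N - p) ∧ m * 2 ^ (N - n) < k + 2 ^ (N - p)),
          (f (2 ^ N + k) : ℝ) * tent ((m:ℝ) / 2 ^ n) p ((k:ℝ) / 2 ^ N)
        ≤ ∑ k ∈ ((range (2 ^ N)).erase (m * 2 ^ (N - n))).filter
        (fun k => k < m * 2 ^ (N - n) + 2 ^ (N - p) ∧ m * 2 ^ (N - n) < k + 2 ^ (N - p)),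
          (f (2 ^ N + k) : ℝ) :=
      sum_le_sum fun k _ => mul_le_of_le_one_right (Nat.cast_nonneg _) (tent_le_one _ _ _)
    have hsets : ((range (2 ^ N)).erase (m * 2 ^ (N - n))).filter
        (fun k => k < m * 2 ^ (N - n) + 2 ^ (N - p) ∧ m * 2 ^ (N - n) < k + 2 ^ (N - p))
        = (range (2 ^ N)).filter (fun k => k ≠ m * 2 ^ (N - n) ∧
            k < m * 2 ^ (N - n) + 2 ^ (N - p) ∧ m * 2 ^ (N - n) < k + 2 ^ (N - p)) := by
      ext k
      simp only [mem_filter, mem_erase, mem_range]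
      tauto
    have hcore := err_core heven hodd hA₁ hn hm hmlt hpn hpN
    have hcoreR : ∑ k ∈ (range (2 ^ N)).filter (fun k => k ≠ m * 2 ^ (N - n) ∧
            k < m * 2 ^ (N - n) + 2 ^ (N - p) ∧ m * 2 ^ (N - n) < k + 2 ^ (N - p)),
          (f (2 ^ N + k) : ℝ) ≤ 2 * (Sf f (N - p) : ℝ) := by
      rw [← Nat.cast_sum]
      exact_mod_cast hcore
    have htot : ∑ k ∈ range (2 ^ N), (f (2 ^ N + k) : ℝ)
          * tent ((m:ℝ) / 2 ^ n) p ((k:ℝ) / 2 ^ N)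
        ≤ (f (2 ^ N + m * 2 ^ (N - n)) : ℝ) + 2 * (Sf f (N - p) : ℝ) := by
      rw [hsum1, ← hsplit, hzero, hsets]
      rw [hsets] at hfle
      linarith
    calc (Sf f N : ℝ)⁻¹
          * ∑ k ∈ range (2 ^ N), (f (2 ^ N + k) : ℝ) * tent ((m:ℝ) / 2 ^ n) p ((k:ℝ) / 2 ^ N)
        ≤ (Sf f N : ℝ)⁻¹ * ((f (2 ^ N + m * 2 ^ (N - n)) : ℝ) + 2 * (Sf f (N - p) : ℝ)) :=
          mul_le_mul_of_nonneg_left htot (inv_nonneg.2 hSf.le)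
      _ = (f (2 ^ N + m * 2 ^ (N - n)) : ℝ) / (Sf f N : ℝ)
            + 2 * (Sf f (N - p) : ℝ) / (Sf f N : ℝ) := by
          rw [mul_add, inv_mul_eq_div, inv_mul_eq_div]
      _ ≤ (f (2 ^ N + m * 2 ^ (N - n)) : ℝ) / (Sf f N : ℝ)
            + 2 * ((f 1 : ℝ) + ((b₀:ℝ) + b₁) / ((A₀:ℝ) - 2)) / (A₀:ℝ) ^ p :=
          add_le_add_right (err_le heven hodd hA₁ hA₀ hf1 hpN) _

include heven hodd hA₁ hA₀ hf1 in
lemma hbd_zero {p N : ℕ} (hpN : p ≤ N) :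
    (f (2 ^ N) : ℝ) / (Sf f N : ℝ)
        ≤ ∫ y, tent 0 p y ∂(ghostApprox f N) ∧
      ∫ y, tent 0 p y ∂(ghostApprox f N)
        ≤ (f (2 ^ N) : ℝ) / (Sf f N : ℝ)
          + 2 * ((f 1 : ℝ) + ((b₀:ℝ) + b₁) / ((A₀:ℝ) - 2)) / (A₀:ℝ) ^ p := by
  have h2N : (0:ℝ) < 2 ^ N := by positivity
  have hSf : (0:ℝ) < (Sf f N : ℝ) := Sf_pos_real heven hA₀ hf1 N
  have hk₀mem : 0 ∈ range (2 ^ N) := mem_range.2 (by positivity)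
  have hxcast : ((0 : ℕ) : ℝ) / 2 ^ N = (0:ℝ) := by norm_num
  have hint := integral_ghostApprox' f N (tent 0 p)
  have hf0 : f (2 ^ N + 0) = f (2 ^ N) := by norm_num
  constructor
  · rw [hint]
    have hterm : ∀ k ∈ range (2 ^ N),
        (0:ℝ) ≤ (f (2 ^ N + k) : ℝ) * tent 0 p ((k:ℝ) / 2 ^ N) :=
      fun k _ => mul_nonneg (Nat.cast_nonneg _) (tent_nonneg _ _ _)
    have hsingle := single_le_sum hterm hk₀mem
    rw [hxcast, tent_self, mul_one, hf0] at hsingle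
    calc (f (2 ^ N) : ℝ) / (Sf f N : ℝ)
        = (Sf f N : ℝ)⁻¹ * (f (2 ^ N) : ℝ) := by rw [inv_mul_eq_div]
      _ ≤ (Sf f N : ℝ)⁻¹ * ∑ k ∈ range (2 ^ N), (f (2 ^ N + k) : ℝ) * tent 0 p ((k:ℝ) / 2 ^ N) :=
          mul_le_mul_of_nonneg_left hsingle (inv_nonneg.2 hSf.le)
  · rw [hint]
    have hsum1 : ∑ k ∈ range (2 ^ N), (f (2 ^ N + k) : ℝ) * tent 0 p ((k:ℝ) / 2 ^ N)
        = (f (2 ^ N) : ℝ) * 1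
          + ∑ k ∈ (range (2 ^ N)).erase 0,
              (f (2 ^ N + k) : ℝ) * tent 0 p ((k:ℝ) / 2 ^ N) := by
      rw [← Finset.add_sum_erase _ _ hk₀mem, hxcast, tent_self, hf0]
    have hsplit := sum_filter_add_sum_filter_not ((range (2 ^ N)).erase 0)
      (fun k => k < 2 ^ (N - p))
      (fun k => (f (2 ^ N + k) : ℝ) * tent 0 p ((k:ℝ) / 2 ^ N))
    have hzero : ∑ k ∈ ((range (2 ^ N)).erase 0).filter (fun k => ¬(k < 2 ^ (N - p))),
        (f (2 ^ N + k) : ℝ) * tent 0 p ((k:ℝ) / 2 ^ N) = 0 := by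
      refine sum_eq_zero fun k hk => ?_
      simp only [mem_filter, mem_erase, mem_range] at hk
      obtain ⟨⟨hkne, hkr⟩, hnp⟩ := hk
      have hdist : (2:ℝ) ^ (N - p) ≤ (k : ℝ) := by
        have hcast : ((2 ^ (N - p) : ℕ) : ℝ) ≤ (k : ℝ) := Nat.cast_le.2 (by omega)
        push_cast at hcast
        linarith
      have habs : ((2:ℝ) ^ p)⁻¹ ≤ |(k:ℝ) / 2 ^ N - 0| := by
        rw [sub_zero, abs_of_nonneg (by positivity),
          ← pow_div_pow_eq (by norm_num : (2:ℝ) ≠ 0) hpN]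
        gcongr
      rw [tent_eq_zero habs, mul_zero]
    have hfle : ∑ k ∈ ((range (2 ^ N)).erase 0).filter (fun k => k < 2 ^ (N - p)),
          (f (2 ^ N + k) : ℝ) * tent 0 p ((k:ℝ) / 2 ^ N)
        ≤ ∑ k ∈ ((range (2 ^ N)).erase 0).filter (fun k => k < 2 ^ (N - p)),
          (f (2 ^ N + k) : ℝ) :=
      sum_le_sum fun k _ => mul_le_of_le_one_right (Nat.cast_nonneg _) (tent_le_one _ _ _)
    have hsets : ((range (2 ^ N)).erase 0).filter (fun k => k < 2 ^ (N - p))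
        = (range (2 ^ N)).filter (fun k => k ≠ 0 ∧ k < 2 ^ (N - p)) := by
      ext k
      simp only [mem_filter, mem_erase, mem_range]
      tauto
    have hcore := err_core0 heven hodd hA₁ (N := N) hpN
    have hcoreR : ∑ k ∈ (range (2 ^ N)).filter (fun k => k ≠ 0 ∧ k < 2 ^ (N - p)),
          (f (2 ^ N + k) : ℝ) ≤ 2 * (Sf f (N - p) : ℝ) := by
      rw [← Nat.cast_sum]
      exact_mod_cast hcore
    have htot : ∑ k ∈ range (2 ^ N), (f (2 ^ N + k) : ℝ) * tent 0 p ((k:ℝ) / 2 ^ N)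
        ≤ (f (2 ^ N) : ℝ) + 2 * (Sf f (N - p) : ℝ) := by
      rw [hsum1, ← hsplit, hzero, hsets]
      rw [hsets] at hfle
      linarith
    calc (Sf f N : ℝ)⁻¹ * ∑ k ∈ range (2 ^ N), (f (2 ^ N + k) : ℝ) * tent 0 p ((k:ℝ) / 2 ^ N)
        ≤ (Sf f N : ℝ)⁻¹ * ((f (2 ^ N) : ℝ) + 2 * (Sf f (N - p) : ℝ)) :=
          mul_le_mul_of_nonneg_left htot (inv_nonneg.2 hSf.le)
      _ = (f (2 ^ N) : ℝ) / (Sf f N : ℝ) + 2 * (Sf f (N - p) : ℝ) / (Sf f N : ℝ) := by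
          rw [mul_add, inv_mul_eq_div, inv_mul_eq_div]
      _ ≤ (f (2 ^ N) : ℝ) / (Sf f N : ℝ)
            + 2 * ((f 1 : ℝ) + ((b₀:ℝ) + b₁) / ((A₀:ℝ) - 2)) / (A₀:ℝ) ^ p :=
          add_le_add_right (err_le heven hodd hA₁ hA₀ hf1 hpN) _

end AuxMain

theorem stmt_15 (A₀ A₁ b₀ b₁ : ℕ) (hnz : ¬(A₀ = 0 ∧ A₁ = 0 ∧ b₀ = 0 ∧ b₁ = 0))
    (f : ℕ → ℕ) (hf1 : 1 ≤ f 1)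
    (heven : ∀ n, 1 ≤ n → f (2 * n) = A₀ * f n + b₀)
    (hodd : ∀ n, 1 ≤ n → f (2 * n + 1) = A₁ * f n + b₁)
    (hb : 1 ≤ b₀ + b₁) (hA₁ : A₁ = 0) (hA₀ : 3 ≤ A₀)
    (μ : Measure ℝ) (hμ : IsProbabilityMeasure μ)
    (hlim : WeakLimit (ghostApprox f) μ) :
    μ {(0 : ℝ)} =
        ENNReal.ofReal (((f 1 : ℝ) + (b₀ : ℝ) / ((A₀ : ℝ) - 1)) /
          ((f 1 : ℝ) + ((b₀ : ℝ) + b₁) / ((A₀ : ℝ) - 2))) ∧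
      ∀ n m : ℕ, 1 ≤ n → Odd m → m < 2 ^ n →
        μ {((m : ℝ) / 2 ^ n)} =
          ENNReal.ofReal ((1 / ((f 1 : ℝ) + ((b₀ : ℝ) + b₁) / ((A₀ : ℝ) - 2))) *
            ((b₁ : ℝ) / (A₀ : ℝ) ^ n + (b₀ : ℝ) / ((A₀ : ℝ) ^ n * ((A₀ : ℝ) - 1)))) := by
  haveI := hμ
  have hA := hA3 hA₀
  constructor
  · refine point_mass_of_weaklim μ (ghostApprox f) hlim 0 _
      (fun N => (f (2 ^ N) : ℝ) / (Sf f N : ℝ))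
      (fun p => 2 * ((f 1 : ℝ) + ((b₀:ℝ) + b₁) / ((A₀:ℝ) - 2)) / (A₀:ℝ) ^ p)
      (tendsto_zero_atom heven hodd hA₁ hA₀ hf1) (tendsto_E hA₀ (b₀ := b₀) (b₁ := b₁) (f := f)) ?_
    refine Filter.eventually_atTop.2 ⟨0, fun p _ => Filter.eventually_atTop.2
      ⟨p, fun N hN => hbd_zero heven hodd hA₁ hA₀ hf1 hN⟩⟩
  · intro n m hn hm hmlt
    have hσ := sigma_pos hA₀ hf1 (b₀ := b₀) (b₁ := b₁)
    have hA1 : (A₀:ℝ) - 1 ≠ 0 := by linarith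
    have hApow : (A₀:ℝ) ^ n ≠ 0 := by positivity
    have heq : (1 / ((f 1 : ℝ) + ((b₀ : ℝ) + b₁) / ((A₀ : ℝ) - 2))) *
            ((b₁ : ℝ) / (A₀ : ℝ) ^ n + (b₀ : ℝ) / ((A₀ : ℝ) ^ n * ((A₀ : ℝ) - 1)))
        = (((b₁:ℝ) + (b₀:ℝ) / ((A₀:ℝ) - 1)) * ((A₀:ℝ) ^ n)⁻¹) /
            ((f 1 : ℝ) + ((b₀:ℝ) + b₁) / ((A₀:ℝ) - 2)) := by
      field_simp
    rw [heq]
    refine point_mass_of_weaklim μ (ghostApprox f) hlim ((m:ℝ) / 2 ^ n) _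
      (fun N => (f (2 ^ N + m * 2 ^ (N - n)) : ℝ) / (Sf f N : ℝ))
      (fun p => 2 * ((f 1 : ℝ) + ((b₀:ℝ) + b₁) / ((A₀:ℝ) - 2)) / (A₀:ℝ) ^ p)
      (tendsto_atom heven hodd hA₁ hA₀ hf1 hn hm)
      (tendsto_E hA₀ (b₀ := b₀) (b₁ := b₁) (f := f)) ?_
    refine Filter.eventually_atTop.2 ⟨n + 1, fun p hp => Filter.eventually_atTop.2
      ⟨p, fun N hN => hbd_atom heven hodd hA₁ hA₀ hf1 hn hm hmlt (by omega) hN⟩⟩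
end

section
/- Let f(n) = n. Then the probability measures μ_N = (1/Σ(N)) Σ_{n=0}^{2^N−1} (2^N + n)·δ_{n/2^N}, where Σ(N) = Σ_{n=0}^{2^N−1} (2^N + n), converge weakly as N → ∞ to the absolutely continuous probability measure on [0,1) with density g(x) = (2 + 2x)/3 with respect to Lebesgue measure. -/
open MeasureTheory Filter Topology

lemma floor_div_tendsto (x : ℝ) :
    Tendsto (fun N : ℕ => (⌊(2:ℝ)^N * x⌋ : ℝ) / 2^N) atTop (𝓝 x) := by
  rw [tendsto_iff_dist_tendsto_zero]
  apply squeeze_zero (fun N => dist_nonneg) (g := fun N => (1/2:ℝ)^N)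
  · intro N
    have hp : (0:ℝ) < 2^N := by positivity
    have l1 := Int.floor_le ((2:ℝ)^N * x)
    have l2 := Int.lt_floor_add_one ((2:ℝ)^N * x)
    rw [Real.dist_eq, abs_sub_comm, abs_of_nonneg]
    · rw [div_pow, one_pow, sub_le_iff_le_add, ← add_div, le_div_iff₀ hp]
      nlinarith
    · rw [sub_nonneg, div_le_iff₀ hp]
      nlinarith
  · exact tendsto_pow_atTop_nhds_zero_of_lt_one (by norm_num) (by norm_num)

/-- Riemann-sum convergence for continuous functions at dyadic partitions. -/
lemma riemann_dyadic (h : ℝ → ℝ) (hc : Continuous h) :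
    Tendsto (fun N : ℕ => (∑ n ∈ Finset.range (2^N), h (n / 2^N)) / 2^N) atTop
      (𝓝 (∫ x in Set.Ico (0:ℝ) 1, h x)) := by
  set F : ℕ → ℝ → ℝ := fun N x => h ((⌊(2:ℝ)^N * x⌋ : ℝ) / 2^N) with hF
  have hmeas : ∀ N, Measurable (F N) := by
    intro N
    exact (measurable_of_countable (fun z : ℤ => h ((z:ℝ)/2^N))).comp
      ((measurable_const.mul measurable_id).floor)
  have hfl : ∀ N : ℕ, ∀ k : ℕ, ∀ x : ℝ, (k:ℝ)/2^N ≤ x → x < ((k:ℝ)+1)/2^N →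
      F N x = h ((k:ℝ)/2^N) := by
    intro N k x h1 h2
    have hp : (0:ℝ) < 2^N := by positivity
    have : ⌊(2:ℝ)^N * x⌋ = (k : ℤ) := by
      rw [Int.floor_eq_iff]
      rw [div_le_iff₀ hp] at h1
      rw [lt_div_iff₀ hp] at h2
      constructor
      · push_cast; linarith
      · push_cast; linarith
    simp only [hF, this, Int.cast_natCast]
  have key : ∀ N, ∫ x in Set.Ico (0:ℝ) 1, F N x =
      (∑ n ∈ Finset.range (2^N), h (n / 2^N)) / 2^N := by
    intro N
    have hp : (0:ℝ) < 2^N := by positivity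
    set a : ℕ → ℝ := fun k => (k:ℝ)/2^N with ha
    have hmono : ∀ k : ℕ, a k < a (k+1) := by
      intro k; simp only [ha]
      apply div_lt_div_of_pos_right _ hp
      push_cast; linarith
    have hae : ∀ k : ℕ, ∀ᵐ x ∂(volume : Measure ℝ),
        x ∈ Set.uIoc (a k) (a (k+1)) → F N x = h (a k) := by
      intro k
      rw [Set.uIoc_of_le (hmono k).le, ae_iff]
      refine measure_mono_null (fun x hx => ?_) (measure_singleton (a (k+1)))
      simp only [Set.mem_setOf_eq, Classical.not_imp, Set.mem_Ioc] at hx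
      obtain ⟨⟨hx1, hx2⟩, hx3⟩ := hx
      simp only [Set.mem_singleton_iff]
      by_contra hne
      have hlt : x < a (k+1) := lt_of_le_of_ne hx2 hne
      exact hx3 (hfl N k x hx1.le (by simpa [ha] using hlt))
    have hint : ∀ k, k < 2^N → IntervalIntegrable (F N) volume (a k) (a (k+1)) := by
      intro k _
      refine (intervalIntegrable_const (c := h (a k))).congr_ae ?_
      rw [EventuallyEq, ae_restrict_iff' measurableSet_uIoc]
      filter_upwards [hae k] with x hx hmem
      exact (hx hmem).symm
    have piece : ∀ k : ℕ, ∫ x in (a k)..(a (k+1)), F N x = h (a k) / 2^N := by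
      intro k
      rw [intervalIntegral.integral_congr_ae (g := fun _ => h (a k)) (hae k)]
      rw [intervalIntegral.integral_const, smul_eq_mul]
      have : a (k+1) - a k = 1/2^N := by
        simp only [ha]; push_cast; field_simp; ring
      rw [this]; ring
    calc ∫ x in Set.Ico (0:ℝ) 1, F N x
        = ∫ x in Set.Ioc (0:ℝ) 1, F N x :=
          setIntegral_congr_set (Ioo_ae_eq_Ico.symm.trans Ioo_ae_eq_Ioc)
      _ = ∫ x in (0:ℝ)..1, F N x := (intervalIntegral.integral_of_le zero_le_one).symm
      _ = ∫ x in (a 0)..(a (2^N)), F N x := by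
          simp only [ha]; norm_num
      _ = ∑ k ∈ Finset.range (2^N), ∫ x in (a k)..(a (k+1)), F N x :=
          (intervalIntegral.sum_integral_adjacent_intervals hint).symm
      _ = ∑ k ∈ Finset.range (2^N), h (a k) / 2^N :=
          Finset.sum_congr rfl fun k _ => piece k
      _ = (∑ n ∈ Finset.range (2^N), h (n / 2^N)) / 2^N := by
          rw [Finset.sum_div]
  obtain ⟨C, hC⟩ := (isCompact_Icc (a := (0:ℝ)) (b := 1)).exists_bound_of_continuousOn
    hc.continuousOn
  have main : Tendsto (fun N => ∫ x in Set.Ico (0:ℝ) 1, F N x) atTop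
      (𝓝 (∫ x in Set.Ico (0:ℝ) 1, h x)) := by
    apply tendsto_integral_of_dominated_convergence (fun _ => C)
      (fun N => (hmeas N).aestronglyMeasurable) (integrable_const C)
    · intro N
      rw [ae_restrict_iff' measurableSet_Ico]
      apply ae_of_all
      rintro x ⟨hx0, hx1⟩
      apply hC
      have hp : (0:ℝ) < 2^N := by positivity
      constructor
      · apply div_nonneg _ hp.le
        exact_mod_cast Int.floor_nonneg.mpr (by positivity)
      · rw [div_le_one hp]
        calc ((⌊(2:ℝ)^N * x⌋ : ℝ)) ≤ (2:ℝ)^N * x := Int.floor_le _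
          _ ≤ 2^N := by nlinarith
    · apply ae_of_all
      intro x
      exact (hc.tendsto _).comp (floor_div_tendsto x)
  exact main.congr (fun N => key N)

lemma ghost_integral_eq (g : BoundedContinuousFunction ℝ ℝ) (N : ℕ) :
    ∫ x, g x ∂(ghostApprox (fun n => n) N) =
      (∑ n ∈ Finset.range (2^N), ((2^N + n : ℕ) : ℝ) * g ((n:ℝ) / 2^N)) *
        (((∑ n ∈ Finset.range (2^N), (2^N + n) : ℕ) : ℝ))⁻¹ := by
  rw [ghostApprox]
  simp only [integral_smul_measure]
  rw [integral_finset_sum_measure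
    (μ := fun n : ℕ => ((2^N+n : ℕ) : ENNReal) • Measure.dirac ((n:ℝ)/2^N))
    (fun n _ =>
    ((g.integrable (μ := Measure.dirac ((n:ℝ)/2^N))).smul_measure (ENNReal.natCast_ne_top _)))]
  simp only [integral_smul_measure, integral_dirac, ← Nat.cast_sum, ENNReal.toReal_inv,
    ENNReal.toReal_natCast, smul_eq_mul]
  ring

theorem stmt_17 :
    WeakLimit (ghostApprox (fun n => n))
      ((volume.restrict (Set.Ico (0:ℝ) 1)).withDensity
        fun x => ENNReal.ofReal ((2 + 2 * x) / 3)) := by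
  intro g
  set h : ℝ → ℝ := fun x => (1 + x) * g x with hh
  have hch : Continuous h := (continuous_const.add continuous_id).mul g.continuous
  have hR := riemann_dyadic h hch
  set I := ∫ x in Set.Ico (0:ℝ) 1, h x with hI
  -- value of the limit integral
  have hRHS : (∫ x, g x ∂((volume.restrict (Set.Ico (0:ℝ) 1)).withDensity
      fun x => ENNReal.ofReal ((2 + 2 * x) / 3))) = I * (2/3) := by
    have hmeas : Measurable (fun x : ℝ => Real.toNNReal ((2 + 2 * x) / 3)) :=
      (continuous_real_toNNReal.comp (by continuity)).measurable
    have : (fun x : ℝ => ENNReal.ofReal ((2 + 2 * x) / 3)) =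
        fun x : ℝ => ((Real.toNNReal ((2 + 2 * x) / 3) : NNReal) : ENNReal) := rfl
    rw [this, integral_withDensity_eq_integral_smul hmeas]
    have : ∫ x in Set.Ico (0:ℝ) 1, Real.toNNReal ((2 + 2 * x) / 3) • g x =
        ∫ x in Set.Ico (0:ℝ) 1, (2/3) * h x := by
      apply setIntegral_congr_fun measurableSet_Ico
      intro x hx
      have hx0 : (0:ℝ) ≤ x := hx.1
      have hd : (0:ℝ) ≤ (2 + 2 * x) / 3 := by linarith
      simp only [NNReal.smul_def, Real.coe_toNNReal _ hd, hh, smul_eq_mul]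
      ring
    rw [this, integral_const_mul, hI]
    ring
  rw [hRHS]
  -- limit of the normalising factors
  have rlim : Tendsto (fun N : ℕ => 2 / (3 - (1/2:ℝ)^N)) atTop (𝓝 (2/3)) := by
    have : Tendsto (fun N : ℕ => (3:ℝ) - (1/2:ℝ)^N) atTop (𝓝 (3 - 0)) :=
      tendsto_const_nhds.sub
        (tendsto_pow_atTop_nhds_zero_of_lt_one (by norm_num) (by norm_num))
    have h2 : Tendsto (fun N : ℕ => (2:ℝ) / (3 - (1/2:ℝ)^N)) atTop (𝓝 (2 / (3 - 0))) :=
      tendsto_const_nhds.div this (by norm_num)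
    simpa using h2
  have hprod := hR.mul rlim
  refine hprod.congr fun N => ?_
  -- identify the integral against `ghostApprox` with the explicit product
  have hp : (0:ℝ) < 2^N := by positivity
  have h1 : (1:ℕ) ≤ 2^N := Nat.one_le_two_pow
  have gauss : (∑ n ∈ Finset.range (2^N), (n:ℝ)) = 2^N * ((2:ℝ)^N - 1) / 2 := by
    have := Finset.sum_range_id_mul_two (2^N)
    have hcast : (((∑ n ∈ Finset.range (2^N), n) * 2 : ℕ) : ℝ) = ((2^N * (2^N - 1) : ℕ) : ℝ) := by
      exact_mod_cast congrArg (Nat.cast : ℕ → ℝ) this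
    push_cast [Nat.cast_sub h1] at hcast
    linarith
  have hS : ((∑ n ∈ Finset.range (2^N), (2^N + n) : ℕ) : ℝ) = 2^N * (3 * 2^N - 1) / 2 := by
    push_cast
    rw [Finset.sum_add_distrib, Finset.sum_const, Finset.card_range, nsmul_eq_mul, gauss]
    push_cast
    ring
  have h1r : (1:ℝ) ≤ 2^N := by exact_mod_cast h1
  have hden : (0:ℝ) < 3 * 2^N - 1 := by linarith
  have hsum : (∑ n ∈ Finset.range (2^N), ((2^N + n : ℕ) : ℝ) * g ((n:ℝ) / 2^N)) =
      2^N * ∑ n ∈ Finset.range (2^N), h ((n:ℝ) / 2^N) := by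
    rw [Finset.mul_sum]
    refine Finset.sum_congr rfl fun n _ => ?_
    have : ((2:ℝ)^N + n) = 2^N * (1 + (n:ℝ)/2^N) := by field_simp
    push_cast
    rw [this, hh]
    ring
  rw [ghost_integral_eq g N, hsum, hS]
  have hhalf : ((1:ℝ)/2)^N = 1/2^N := by rw [div_pow, one_pow]
  rw [hhalf]
  have hne1 : (3:ℝ) - 1/2^N ≠ 0 := by
    have : (1:ℝ)/2^N ≤ 1 := by
      rw [div_le_one hp]; exact_mod_cast h1
    linarith
  field_simp
end

section
/- Let J : ℕ → ℕ be the Josephus sequence, defined by J(1) = 1, J(2n) = 2J(n) − 1 and J(2n+1) = 2J(n) + 1 for n ≥ 1 (equivalently, J(2^N + k) = 2k + 1 for 0 ≤ k < 2^N). Then Σ(N) = Σ_{n=0}^{2^N−1} J(2^N + n) = 4^N, and the probability measures μ_N = (1/4^N) Σ_{n=0}^{2^N−1} (2n+1)·δ_{n/2^N} converge weakly as N → ∞ to the absolutely continuous probability measure on [0,1) with density g(x) = 2x with respect to Lebesgue measure. -/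
open MeasureTheory Filter Topology

/-- Riemann sums along dyadic partitions converge to the integral, for continuous functions. -/
lemma riemann_pow2 (h : ℝ → ℝ) (hc : Continuous h) :
    Tendsto (fun N : ℕ => ∑ n ∈ Finset.range (2 ^ N), (2 ^ N : ℝ)⁻¹ * h ((n : ℝ) / 2 ^ N))
      atTop (𝓝 (∫ x in (0:ℝ)..1, h x)) := by
  rw [Metric.tendsto_atTop]
  intro ε hε
  have hcpt : IsCompact (Set.Icc (0:ℝ) 1) := isCompact_Icc
  have huc : UniformContinuousOn h (Set.Icc (0:ℝ) 1) :=
    hcpt.uniformContinuousOn_of_continuous hc.continuousOn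
  rw [Metric.uniformContinuousOn_iff] at huc
  obtain ⟨δ, hδ, hδ'⟩ := huc (ε / 2) (by linarith)
  obtain ⟨N0, hN0⟩ : ∃ N0 : ℕ, ((1:ℝ)/2) ^ N0 < δ :=
    exists_pow_lt_of_lt_one hδ (by norm_num)
  refine ⟨N0, fun N hN => ?_⟩
  have h2N : (0:ℝ) < 2 ^ N := by positivity
  have hsmall : (2 ^ N : ℝ)⁻¹ < δ := by
    calc (2 ^ N : ℝ)⁻¹ = ((1:ℝ)/2) ^ N := by rw [one_div, inv_pow]
      _ ≤ ((1:ℝ)/2) ^ N0 := pow_le_pow_of_le_one (by norm_num) (by norm_num) hN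
      _ < δ := hN0
  set a : ℕ → ℝ := fun k => (k : ℝ) / 2 ^ N with ha
  have hint : ∀ k < 2 ^ N, IntervalIntegrable h volume (a k) (a (k + 1)) :=
    fun k _ => hc.intervalIntegrable _ _
  have hsplit : ∑ k ∈ Finset.range (2 ^ N), ∫ x in a k..a (k + 1), h x
      = ∫ x in (0:ℝ)..1, h x := by
    rw [intervalIntegral.sum_integral_adjacent_intervals hint]
    norm_num [ha]
  have hstep : ∀ k : ℕ, a (k + 1) - a k = (2 ^ N : ℝ)⁻¹ := by
    intro k; simp only [ha]; push_cast; field_simp; ring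
  rw [Real.dist_eq, ← hsplit, ← Finset.sum_sub_distrib]
  have hbound : ∀ k ∈ Finset.range (2 ^ N),
      |(2 ^ N : ℝ)⁻¹ * h (a k) - ∫ x in a k..a (k + 1), h x| ≤ ε / 2 * (2 ^ N : ℝ)⁻¹ := by
    intro k hk
    rw [Finset.mem_range] at hk
    have hconst : (2 ^ N : ℝ)⁻¹ * h (a k) = ∫ _ in a k..a (k + 1), h (a k) := by
      rw [intervalIntegral.integral_const, smul_eq_mul, hstep]
    rw [hconst, ← intervalIntegral.integral_sub (intervalIntegrable_const) (hint k hk)]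
    have hle : a k ≤ a (k + 1) := by
      have := hstep k
      have : (0:ℝ) < (2 ^ N : ℝ)⁻¹ := by positivity
      linarith [hstep k]
    have hC : ∀ x ∈ Set.uIoc (a k) (a (k + 1)), ‖h (a k) - h x‖ ≤ ε / 2 := by
      intro x hx
      rw [Set.uIoc_of_le hle] at hx
      have hak : a k ∈ Set.Icc (0:ℝ) 1 := by
        constructor
        · exact div_nonneg (Nat.cast_nonneg k) (le_of_lt h2N)
        · rw [div_le_one h2N]
          exact_mod_cast Nat.le_of_lt_succ (Nat.lt_succ_of_lt hk)
      have hx1 : x ∈ Set.Icc (0:ℝ) 1 := by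
        constructor
        · linarith [hx.1, hak.1]
        · calc x ≤ a (k + 1) := hx.2
            _ ≤ 1 := by
              rw [ha]; simp only
              rw [div_le_one h2N]
              exact_mod_cast Nat.succ_le_of_lt hk
      have hdist : dist (a k) x < δ := by
        rw [Real.dist_eq, abs_sub_lt_iff]
        constructor
        · linarith [hx.1, hsmall]
        · have : x ≤ a k + (2 ^ N : ℝ)⁻¹ := by linarith [hx.2, hstep k]
          linarith
      have := hδ' (a k) hak x hx1 hdist
      rw [Real.dist_eq] at this
      exact le_of_lt this
    calc |∫ x in a k..a (k + 1), (h (a k) - h x)| ≤ ε / 2 * |a (k + 1) - a k| :=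
          intervalIntegral.norm_integral_le_of_norm_le_const hC
      _ = ε / 2 * (2 ^ N : ℝ)⁻¹ := by rw [hstep]; rw [abs_of_pos (by positivity)]
  calc |∑ k ∈ Finset.range (2 ^ N), ((2 ^ N : ℝ)⁻¹ * h (a k) - ∫ x in a k..a (k + 1), h x)|
      ≤ ∑ k ∈ Finset.range (2 ^ N), |(2 ^ N : ℝ)⁻¹ * h (a k) - ∫ x in a k..a (k + 1), h x| :=
        Finset.abs_sum_le_sum_abs _ _
    _ ≤ ∑ k ∈ Finset.range (2 ^ N), ε / 2 * (2 ^ N : ℝ)⁻¹ := Finset.sum_le_sum hbound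
    _ = ε / 2 := by
        rw [Finset.sum_const, Finset.card_range, nsmul_eq_mul]
        push_cast
        field_simp
    _ < ε := by linarith

lemma sum_odd (m : ℕ) : ∑ i ∈ Finset.range m, (2 * i + 1) = m ^ 2 := by
  induction m with
  | zero => simp
  | succ n ih => rw [Finset.sum_range_succ, ih]; ring

/-- The closed form of the Josephus sequence on the fundamental region. -/
lemma joseph_aux (J : ℕ → ℕ) (hJ1 : J 1 = 1)
    (heven : ∀ n, 1 ≤ n → (J (2 * n) : ℤ) = 2 * (J n : ℤ) - 1)
    (hodd : ∀ n, 1 ≤ n → (J (2 * n + 1) : ℤ) = 2 * (J n : ℤ) + 1) :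
    ∀ N k, k < 2 ^ N → J (2 ^ N + k) = 2 * k + 1 := by
  intro N
  induction N with
  | zero => intro k hk; interval_cases k; simpa using hJ1
  | succ N ih =>
    intro k hk
    have h2 : 2 ^ (N + 1) = 2 * 2 ^ N := by ring
    have h1 : ∀ q : ℕ, 1 ≤ 2 ^ N + q := fun q => le_trans Nat.one_le_two_pow (Nat.le_add_right _ _)
    rcases Nat.even_or_odd k with ⟨q, hq⟩ | ⟨q, hq⟩
    · subst hq
      have hq' : q < 2 ^ N := by omega
      have key : 2 ^ (N + 1) + (q + q) = 2 * (2 ^ N + q) := by ring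
      rw [key]
      have : (J (2 * (2 ^ N + q)) : ℤ) = ((2 * (q + q) + 1 : ℕ) : ℤ) := by
        rw [heven _ (h1 q), ih q hq']; push_cast; ring
      exact_mod_cast this
    · subst hq
      have hq' : q < 2 ^ N := by omega
      have key : 2 ^ (N + 1) + (2 * q + 1) = 2 * (2 ^ N + q) + 1 := by ring
      rw [key]
      have : (J (2 * (2 ^ N + q) + 1) : ℤ) = ((2 * (2 * q + 1) + 1 : ℕ) : ℤ) := by
        rw [hodd _ (h1 q), ih q hq']; push_cast; ring
      exact_mod_cast this

lemma sumJ (J : ℕ → ℕ) (hJ : ∀ N k, k < 2 ^ N → J (2 ^ N + k) = 2 * k + 1) (N : ℕ) :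
    ∑ n ∈ Finset.range (2 ^ N), J (2 ^ N + n) = 4 ^ N := by
  calc ∑ n ∈ Finset.range (2 ^ N), J (2 ^ N + n)
      = ∑ n ∈ Finset.range (2 ^ N), (2 * n + 1) :=
        Finset.sum_congr rfl fun n hn => hJ N n (Finset.mem_range.mp hn)
    _ = (2 ^ N) ^ 2 := sum_odd _
    _ = 4 ^ N := by rw [← pow_mul, mul_comm, pow_mul]; norm_num

lemma ghost_integral (J : ℕ → ℕ) (hJ : ∀ N k, k < 2 ^ N → J (2 ^ N + k) = 2 * k + 1)
    (hsum : ∀ N : ℕ, ∑ n ∈ Finset.range (2 ^ N), J (2 ^ N + n) = 4 ^ N)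
    (g : BoundedContinuousFunction ℝ ℝ) (N : ℕ) :
    ∫ x, g x ∂(ghostApprox J N)
      = ∑ n ∈ Finset.range (2 ^ N), ((2 * n + 1 : ℝ) / 4 ^ N) * g ((n : ℝ) / 2 ^ N) := by
  have htot : (∑ n ∈ Finset.range (2 ^ N), (J (2 ^ N + n) : ENNReal)) = ((4 ^ N : ℕ) : ENNReal) := by
    rw [← Nat.cast_sum, hsum N]
  have hintg : ∀ n ∈ Finset.range (2 ^ N),
      Integrable (fun x => g x) ((J (2 ^ N + n) : ENNReal) • Measure.dirac ((n : ℝ) / 2 ^ N)) := by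
    intro n _
    exact (g.integrable _).smul_measure (by simp)
  rw [ghostApprox, htot, integral_smul_measure, integral_finset_sum_measure hintg]
  rw [Finset.smul_sum]
  refine Finset.sum_congr rfl fun n hn => ?_
  rw [Finset.mem_range] at hn
  rw [integral_smul_measure, integral_dirac, hJ N n hn]
  simp only [smul_eq_mul, ← mul_assoc]
  congr 1
  rw [ENNReal.toReal_inv, ENNReal.toReal_natCast, ENNReal.toReal_natCast]
  push_cast
  ring

lemma rhs_integral (g : BoundedContinuousFunction ℝ ℝ) :
    ∫ x, g x ∂((volume.restrict (Set.Ico (0:ℝ) 1)).withDensity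
        fun x => ENNReal.ofReal (2 * x))
      = ∫ x in (0:ℝ)..1, 2 * x * g x := by
  have hmeas : Measurable fun x : ℝ => (2 * x).toNNReal :=
    (measurable_const.mul measurable_id).real_toNNReal
  have h1 : (fun x : ℝ => ENNReal.ofReal (2 * x)) = fun x => ((2 * x).toNNReal : ENNReal) := rfl
  rw [h1, integral_withDensity_eq_integral_smul hmeas]
  have h2 : ∫ x in Set.Ico (0:ℝ) 1, (2*x).toNNReal • g x = ∫ x in Set.Ico (0:ℝ) 1, 2 * x * g x := by
    refine setIntegral_congr_fun measurableSet_Ico (fun x hx => ?_)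
    rw [NNReal.smul_def, Real.coe_toNNReal _ (by linarith [hx.1]), smul_eq_mul]
  rw [h2, integral_Ico_eq_integral_Ioo, intervalIntegral.integral_of_le zero_le_one,
    integral_Ioc_eq_integral_Ioo]

theorem stmt_18 (J : ℕ → ℕ) (hJ1 : J 1 = 1)
    (heven : ∀ n, 1 ≤ n → (J (2 * n) : ℤ) = 2 * (J n : ℤ) - 1)
    (hodd : ∀ n, 1 ≤ n → (J (2 * n + 1) : ℤ) = 2 * (J n : ℤ) + 1) :
    (∀ N : ℕ, ∑ n ∈ Finset.range (2 ^ N), J (2 ^ N + n) = 4 ^ N) ∧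
      WeakLimit (ghostApprox J)
        ((volume.restrict (Set.Ico (0:ℝ) 1)).withDensity
          fun x => ENNReal.ofReal (2 * x)) := by
  have hJ : ∀ N k, k < 2 ^ N → J (2 ^ N + k) = 2 * k + 1 := joseph_aux J hJ1 heven hodd
  have hsum := sumJ J hJ
  refine ⟨hsum, fun g => ?_⟩
  simp only [ghost_integral J hJ hsum g, rhs_integral g]
  set h : ℝ → ℝ := fun x => 2 * x * g x with hdef
  have hch : Continuous h := (continuous_const.mul continuous_id).mul g.continuous
  have hA := riemann_pow2 h hch
  have hB : Tendsto (fun N : ℕ => ∑ n ∈ Finset.range (2 ^ N), (4 ^ N : ℝ)⁻¹ * g ((n : ℝ) / 2 ^ N))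
      atTop (𝓝 0) := by
    have hb : ∀ N : ℕ, ‖∑ n ∈ Finset.range (2 ^ N), (4 ^ N : ℝ)⁻¹ * g ((n : ℝ) / 2 ^ N)‖
        ≤ ((1:ℝ)/2) ^ N * ‖g‖ := by
      intro N
      have h4 : (4:ℝ) ^ N = 2 ^ N * 2 ^ N := by
        rw [show (4:ℝ) = 2 * 2 by norm_num, mul_pow]
      calc ‖∑ n ∈ Finset.range (2 ^ N), (4 ^ N : ℝ)⁻¹ * g ((n : ℝ) / 2 ^ N)‖
          ≤ ∑ n ∈ Finset.range (2 ^ N), ‖(4 ^ N : ℝ)⁻¹ * g ((n : ℝ) / 2 ^ N)‖ :=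
            norm_sum_le _ _
        _ ≤ ∑ _n ∈ Finset.range (2 ^ N), (4 ^ N : ℝ)⁻¹ * ‖g‖ := by
            refine Finset.sum_le_sum fun n _ => ?_
            rw [norm_mul, Real.norm_eq_abs, abs_of_pos (by positivity)]
            exact mul_le_mul_of_nonneg_left (g.norm_coe_le_norm _) (by positivity)
        _ = ((1:ℝ)/2) ^ N * ‖g‖ := by
            rw [Finset.sum_const, Finset.card_range, nsmul_eq_mul]
            push_cast
            rw [h4, div_pow]
            field_simp
            ring
    refine squeeze_zero_norm hb ?_
    have := (tendsto_pow_atTop_nhds_zero_of_lt_one (by norm_num : (0:ℝ) ≤ 1/2)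
      (by norm_num : (1:ℝ)/2 < 1)).mul_const ‖g‖
    simpa using this
  have hcomb := hA.add hB
  rw [add_zero] at hcomb
  refine Tendsto.congr (fun N => ?_) hcomb
  rw [← Finset.sum_add_distrib]
  refine Finset.sum_congr rfl fun n _ => ?_
  have h4 : (4:ℝ) ^ N = 2 ^ N * 2 ^ N := by
    rw [show (4:ℝ) = 2 * 2 by norm_num, mul_pow]
  simp only [hdef]
  field_simp [h4]
  rw [h4]; ring
end

section
/- Let t : ℕ → ℕ be the Thue–Morse sequence, defined by t(0) = 0, t(2n) = t(n) and t(2n+1) = 1 − t(n) (equivalently, t(n) is the parity of the number of 1's in the binary expansion of n). Then the probability measures μ_N = (1/Σ(N)) Σ_{n=0}^{2^N−1} t(2^N + n)·δ_{n/2^N}, where Σ(N) = Σ_{n=0}^{2^N−1} t(2^N + n), converge weakly as N → ∞ to Lebesgue measure restricted to [0,1). -/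
open MeasureTheory Filter Topology

/-- Split a sum over `range (2*k)` into pairs. -/
lemma aux_sum_range_two_mul {M : Type*} [AddCommMonoid M] (a : ℕ → M) (k : ℕ) :
    ∑ n ∈ Finset.range (2 * k), a n
      = ∑ m ∈ Finset.range k, (a (2 * m) + a (2 * m + 1)) := by
  induction k with
  | zero => simp
  | succ k ih =>
    have h : 2 * (k + 1) = (2 * k) + 1 + 1 := by ring
    rw [h, Finset.sum_range_succ, Finset.sum_range_succ, ih,
      Finset.sum_range_succ, add_assoc]

/-- For `N` large, `(2:ℝ)^(-N)` is eventually below any positive `δ`. -/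
lemma aux_exists_pow_inv_lt {δ : ℝ} (hδ : 0 < δ) :
    ∃ N₀ : ℕ, ∀ N ≥ N₀, ((2 : ℝ) ^ N)⁻¹ < δ := by
  obtain ⟨n, hn⟩ := exists_pow_lt_of_lt_one hδ (by norm_num : (1/2 : ℝ) < 1)
  refine ⟨n, fun N hN => ?_⟩
  have h2 : ((2 : ℝ) ^ N)⁻¹ ≤ ((2 : ℝ) ^ n)⁻¹ := by
    apply inv_anti₀ (by positivity)
    exact pow_le_pow_right₀ (by norm_num) hN
  calc ((2 : ℝ) ^ N)⁻¹ ≤ ((2 : ℝ) ^ n)⁻¹ := h2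
    _ = (1/2 : ℝ) ^ n := by rw [one_div, inv_pow]
    _ < δ := hn

/-- Uniform continuity data on `[0,1]`. -/
lemma aux_unif (g : ℝ → ℝ) (hg : Continuous g) {ε : ℝ} (hε : 0 < ε) :
    ∃ δ > 0, ∀ x ∈ Set.Icc (0:ℝ) 1, ∀ y ∈ Set.Icc (0:ℝ) 1,
      dist x y < δ → |g x - g y| ≤ ε := by
  have hc : UniformContinuousOn g (Set.Icc (0:ℝ) 1) :=
    isCompact_Icc.uniformContinuousOn_of_continuous hg.continuousOn
  rw [Metric.uniformContinuousOn_iff] at hc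
  obtain ⟨δ, hδ, h⟩ := hc ε hε
  exact ⟨δ, hδ, fun x hx y hy hxy => le_of_lt (by
    have := h x hx y hy hxy
    rwa [Real.dist_eq] at this)⟩

/-- Riemann sums of a continuous function converge to the integral. -/
lemma aux_riemann (g : ℝ → ℝ) (hg : Continuous g) :
    Tendsto (fun N => ((2:ℝ) ^ N)⁻¹ * ∑ n ∈ Finset.range (2 ^ N), g ((n:ℝ) / 2 ^ N))
      atTop (𝓝 (∫ x in (0:ℝ)..1, g x)) := by
  rw [Metric.tendsto_atTop]
  intro ε hε
  obtain ⟨δ, hδ, hu⟩ := aux_unif g hg (half_pos hε)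
  obtain ⟨N₀, hN₀⟩ := aux_exists_pow_inv_lt hδ
  refine ⟨N₀, fun N hN => ?_⟩
  set a : ℕ → ℝ := fun k => (k : ℝ) / 2 ^ N with ha
  have hstep : ∀ k : ℕ, a (k+1) - a k = ((2:ℝ) ^ N)⁻¹ := by
    intro k; simp only [ha]; push_cast; field_simp; ring
  have hle : ∀ k : ℕ, a k ≤ a (k+1) := by
    intro k; have := hstep k; nlinarith [inv_pos.2 (pow_pos (by norm_num : (0:ℝ) < 2) N)]
  have hint : ∀ k : ℕ, k < 2 ^ N → IntervalIntegrable g volume (a k) (a (k+1)) :=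
    fun k _ => hg.intervalIntegrable _ _
  have hI : ∫ x in (0:ℝ)..1, g x
      = ∑ k ∈ Finset.range (2 ^ N), ∫ x in a k..a (k+1), g x := by
    rw [intervalIntegral.sum_integral_adjacent_intervals hint]
    have h0 : a 0 = 0 := by simp [ha]
    have h1 : a (2 ^ N) = 1 := by
      simp only [ha]; rw [div_eq_one_iff_eq (by positivity)]; push_cast; ring
    rw [h0, h1]
  have hRform : ((2:ℝ) ^ N)⁻¹ * ∑ n ∈ Finset.range (2 ^ N), g ((n:ℝ) / 2 ^ N)
      = ∑ k ∈ Finset.range (2 ^ N), ∫ _x in a k..a (k+1), g (a k) := by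
    rw [Finset.mul_sum]
    refine Finset.sum_congr rfl fun k _ => ?_
    rw [intervalIntegral.integral_const, hstep k, smul_eq_mul]
  rw [Real.dist_eq, hRform, hI, ← Finset.sum_sub_distrib]
  have hterm : ∀ k ∈ Finset.range (2 ^ N),
      |(∫ _x in a k..a (k+1), g (a k)) - ∫ x in a k..a (k+1), g x|
        ≤ (ε/2) * ((2:ℝ) ^ N)⁻¹ := by
    intro k hk
    rw [Finset.mem_range] at hk
    rw [← intervalIntegral.integral_sub (intervalIntegrable_const) (hint k hk)]
    have hb : ∀ x ∈ Set.uIoc (a k) (a (k+1)), ‖g (a k) - g x‖ ≤ ε/2 := by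
      intro x hx
      rw [Set.uIoc_of_le (hle k)] at hx
      have hk1 : a (k+1) ≤ 1 := by
        simp only [ha]
        rw [div_le_one (by positivity)]
        exact_mod_cast Nat.succ_le_of_lt hk
      have hk0 : (0:ℝ) ≤ a k := by positivity
      have hx01 : x ∈ Set.Icc (0:ℝ) 1 := ⟨le_of_lt (lt_of_le_of_lt hk0 hx.1), hx.2.trans hk1⟩
      have hak01 : a k ∈ Set.Icc (0:ℝ) 1 := ⟨hk0, (hle k).trans hk1⟩
      have hd : dist (a k) x < δ := by
        rw [Real.dist_eq, abs_of_nonpos (by linarith [hx.1])]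
        have : x - a k ≤ ((2:ℝ) ^ N)⁻¹ := by
          have := hstep k; linarith [hx.2]
        linarith [hN₀ N hN]
      exact Real.norm_eq_abs _ ▸ hu _ hak01 _ hx01 hd
    have := intervalIntegral.norm_integral_le_of_norm_le_const hb
    rw [Real.norm_eq_abs] at this
    calc |∫ x in a k..a (k+1), (g (a k) - g x)| ≤ (ε/2) * |a (k+1) - a k| := this
      _ = (ε/2) * ((2:ℝ) ^ N)⁻¹ := by rw [hstep k, abs_of_nonneg (by positivity)]
  calc |∑ k ∈ Finset.range (2 ^ N),
          ((∫ _x in a k..a (k+1), g (a k)) - ∫ x in a k..a (k+1), g x)|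
      ≤ ∑ k ∈ Finset.range (2 ^ N),
          |(∫ _x in a k..a (k+1), g (a k)) - ∫ x in a k..a (k+1), g x| :=
        Finset.abs_sum_le_sum_abs _ _
    _ ≤ ∑ _k ∈ Finset.range (2 ^ N), (ε/2) * ((2:ℝ) ^ N)⁻¹ := Finset.sum_le_sum hterm
    _ = (ε/2) * ((2:ℝ) ^ N * ((2:ℝ) ^ N)⁻¹) := by
        rw [Finset.sum_const, Finset.card_range]; push_cast; ring
    _ = ε/2 := by rw [mul_inv_cancel₀ (by positivity), mul_one]
    _ < ε := half_lt_self hε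

/-- Signed sums with a `±1` sequence satisfying the Thue–Morse sign recursion tend to `0`. -/
lemma aux_signed (g : ℝ → ℝ) (hg : Continuous g) (e : ℕ → ℝ)
    (hb : ∀ m, |e m| ≤ 1) (he : ∀ m, e (2*m) = e m) (ho : ∀ m, e (2*m+1) = - e m) :
    Tendsto (fun N => ((2:ℝ) ^ N)⁻¹ * ∑ n ∈ Finset.range (2 ^ N), e n * g ((n:ℝ) / 2 ^ N))
      atTop (𝓝 0) := by
  rw [Metric.tendsto_atTop]
  intro ε hε
  obtain ⟨δ, hδ, hu⟩ := aux_unif g hg (half_pos hε)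
  obtain ⟨N₀, hN₀⟩ := aux_exists_pow_inv_lt hδ
  refine ⟨max N₀ 1, fun N hN => ?_⟩
  obtain ⟨K, rfl⟩ : ∃ K, N = K + 1 := ⟨N - 1, by omega⟩
  have h2 : (2:ℕ) ^ (K+1) = 2 * 2 ^ K := by ring
  have hsum : ∑ n ∈ Finset.range (2 ^ (K+1)), e n * g ((n:ℝ) / 2 ^ (K+1))
      = ∑ m ∈ Finset.range (2 ^ K),
          e m * (g (((2*m:ℕ):ℝ) / 2 ^ (K+1)) - g (((2*m+1:ℕ):ℝ) / 2 ^ (K+1))) := by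
    rw [h2, aux_sum_range_two_mul (fun n => e n * g ((n:ℝ) / 2 ^ (K+1)))]
    refine Finset.sum_congr rfl fun m _ => ?_
    rw [he m, ho m]; ring
  have hterm : ∀ m ∈ Finset.range (2 ^ K),
      |e m * (g (((2*m:ℕ):ℝ) / 2 ^ (K+1)) - g (((2*m+1:ℕ):ℝ) / 2 ^ (K+1)))| ≤ ε/2 := by
    intro m hm
    rw [Finset.mem_range] at hm
    have hm1 : (2*m+1 : ℕ) < 2 ^ (K+1) := by rw [h2]; omega
    have hp : (0:ℝ) < 2 ^ (K+1) := by positivity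
    have hx : ((2*m:ℕ):ℝ) / 2 ^ (K+1) ∈ Set.Icc (0:ℝ) 1 := by
      constructor
      · positivity
      · rw [div_le_one hp]; exact_mod_cast le_of_lt (lt_of_le_of_lt (by omega) hm1)
    have hy : ((2*m+1:ℕ):ℝ) / 2 ^ (K+1) ∈ Set.Icc (0:ℝ) 1 := by
      constructor
      · positivity
      · rw [div_le_one hp]; exact_mod_cast le_of_lt hm1
    have hd : dist (((2*m:ℕ):ℝ) / 2 ^ (K+1)) (((2*m+1:ℕ):ℝ) / 2 ^ (K+1)) < δ := by
      rw [Real.dist_eq]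
      have : ((2*m:ℕ):ℝ) / 2 ^ (K+1) - ((2*m+1:ℕ):ℝ) / 2 ^ (K+1) = -(((2:ℝ) ^ (K+1))⁻¹) := by
        push_cast; field_simp; ring
      rw [this, abs_neg, abs_of_nonneg (by positivity)]
      exact hN₀ (K+1) (le_trans (le_max_left _ _) hN)
    calc |e m * (g (((2*m:ℕ):ℝ) / 2 ^ (K+1)) - g (((2*m+1:ℕ):ℝ) / 2 ^ (K+1)))|
        = |e m| * |g (((2*m:ℕ):ℝ) / 2 ^ (K+1)) - g (((2*m+1:ℕ):ℝ) / 2 ^ (K+1))| := abs_mul _ _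
      _ ≤ 1 * (ε/2) := by
          apply mul_le_mul (hb m) (hu _ hx _ hy hd) (abs_nonneg _) zero_le_one
      _ = ε/2 := one_mul _
  rw [Real.dist_eq, sub_zero, abs_mul, abs_of_nonneg (a := ((2:ℝ) ^ (K+1))⁻¹) (by positivity)]
  calc ((2:ℝ) ^ (K+1))⁻¹ * |∑ n ∈ Finset.range (2 ^ (K+1)), e n * g ((n:ℝ) / 2 ^ (K+1))|
      ≤ ((2:ℝ) ^ (K+1))⁻¹ * ((2:ℝ) ^ K * (ε/2)) := by
        apply mul_le_mul_of_nonneg_left _ (by positivity)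
        rw [hsum]
        calc |∑ m ∈ Finset.range (2 ^ K),
                e m * (g (((2*m:ℕ):ℝ) / 2 ^ (K+1)) - g (((2*m+1:ℕ):ℝ) / 2 ^ (K+1)))|
            ≤ ∑ m ∈ Finset.range (2 ^ K),
                |e m * (g (((2*m:ℕ):ℝ) / 2 ^ (K+1)) - g (((2*m+1:ℕ):ℝ) / 2 ^ (K+1)))| :=
              Finset.abs_sum_le_sum_abs _ _
          _ ≤ ∑ _m ∈ Finset.range (2 ^ K), (ε/2) := Finset.sum_le_sum hterm
          _ = (2:ℝ) ^ K * (ε/2) := by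
              rw [Finset.sum_const, Finset.card_range]; push_cast; ring
    _ = ε/4 := by
        rw [pow_succ]
        field_simp
        ring
    _ < ε := by linarith

theorem stmt_19 (t : ℕ → ℕ) (h0 : t 0 = 0)
    (heven : ∀ n, t (2 * n) = t n) (hodd : ∀ n, t (2 * n + 1) = 1 - t n) :
    WeakLimit (ghostApprox t) (volume.restrict (Set.Ico (0:ℝ) 1)) := by
  -- basic facts about t
  have hle1 : ∀ n, t n ≤ 1 := by
    intro n
    induction n using Nat.strong_induction_on with
    | _ n ih =>
      rcases Nat.even_or_odd n with ⟨m, hm⟩ | ⟨m, hm⟩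
      · rcases Nat.eq_zero_or_pos m with rfl | hm0
        · have hn0 : n = 0 := by omega
          rw [hn0, h0]
          exact Nat.zero_le 1
        · have : n = 2 * m := by omega
          rw [this, heven]; exact ih m (by omega)
      · have : n = 2 * m + 1 := by omega
        rw [this, hodd]; exact Nat.sub_le _ _
  have hshift : ∀ N n, n < 2 ^ N → t (2 ^ N + n) = 1 - t n := by
    intro N
    induction N with
    | zero =>
      intro n hn
      have : n = 0 := by omega
      subst this
      simpa [h0] using hodd 0
    | succ N ih =>
      intro n hn
      have h2 : (2:ℕ) ^ (N+1) = 2 * 2 ^ N := by ring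
      rcases Nat.even_or_odd n with ⟨m, hm⟩ | ⟨m, hm⟩
      · have hmlt : m < 2 ^ N := by omega
        have e1 : 2 ^ (N+1) + n = 2 * (2 ^ N + m) := by omega
        have e2 : n = 2 * m := by omega
        rw [e1, heven, ih m hmlt, e2, heven]
      · have hmlt : m < 2 ^ N := by omega
        have e1 : 2 ^ (N+1) + n = 2 * (2 ^ N + m) + 1 := by omega
        have e2 : n = 2 * m + 1 := by omega
        rw [e1, hodd, ih m hmlt, e2, hodd]
  have hSigma : ∀ K, ∑ n ∈ Finset.range (2 ^ (K+1)), t (2 ^ (K+1) + n) = 2 ^ K := by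
    intro K
    have h1 : ∀ n ∈ Finset.range (2 ^ (K+1)), t (2 ^ (K+1) + n) = 1 - t n :=
      fun n hn => hshift _ _ (Finset.mem_range.1 hn)
    rw [Finset.sum_congr rfl h1, show (2:ℕ) ^ (K+1) = 2 * 2 ^ K by ring,
      aux_sum_range_two_mul (fun n => 1 - t n)]
    have h2 : ∀ m ∈ Finset.range (2 ^ K), (1 - t (2*m)) + (1 - t (2*m+1)) = 1 := by
      intro m _
      rw [heven, hodd]
      have := hle1 m; omega
    rw [Finset.sum_congr rfl h2]
    simp
  intro g
  -- integral against the approximant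
  have hint : ∀ N : ℕ, ∫ x, g x ∂(ghostApprox t N)
      = ((∑ n ∈ Finset.range (2 ^ N), (t (2 ^ N + n) : ENNReal))⁻¹).toReal *
          ∑ n ∈ Finset.range (2 ^ N), (t (2 ^ N + n) : ℝ) * g ((n:ℝ) / 2 ^ N) := by
    intro N
    have hintg : ∀ i ∈ Finset.range (2 ^ N),
        Integrable (⇑g) ((t (2 ^ N + i) : ENNReal) • Measure.dirac ((i:ℝ) / 2 ^ N)) :=
      fun i _ => (g.integrable _).smul_measure (ENNReal.natCast_ne_top _)
    rw [show ghostApprox t N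
        = (∑ n ∈ Finset.range (2 ^ N), (t (2 ^ N + n) : ENNReal))⁻¹ •
            ∑ n ∈ Finset.range (2 ^ N),
              (t (2 ^ N + n) : ENNReal) • Measure.dirac ((n : ℝ) / 2 ^ N) from rfl,
      integral_smul_measure, integral_finset_sum_measure hintg, smul_eq_mul]
    congr 1
    refine Finset.sum_congr rfl fun n _ => ?_
    rw [integral_smul_measure, integral_dirac, smul_eq_mul, ENNReal.toReal_natCast]
  -- the sign sequence
  set e : ℕ → ℝ := fun n => 1 - 2 * (t n : ℝ) with he_def
  have heb : ∀ m, |e m| ≤ 1 := by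
    intro m
    have := hle1 m
    have h01 : (t m : ℝ) = 0 ∨ (t m : ℝ) = 1 := by
      rcases Nat.le_one_iff_eq_zero_or_eq_one.1 (hle1 m) with h | h <;> simp [h]
    rcases h01 with h | h <;> norm_num [he_def, h]
  have hee : ∀ m, e (2*m) = e m := by intro m; simp [he_def, heven]
  have heo : ∀ m, e (2*m+1) = - e m := by
    intro m
    have h1 : (t (2*m+1) : ℝ) = 1 - (t m : ℝ) := by
      rw [hodd]
      push_cast [Nat.cast_sub (hle1 m)]
      ring
    have h2 : (1:ℝ) - 2 * (t (2*m+1) : ℝ) = -(1 - 2 * (t m : ℝ)) := by rw [h1]; ring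
    simpa [he_def] using h2
  -- target integral
  have htarget : ∫ x, g x ∂(volume.restrict (Set.Ico (0:ℝ) 1)) = ∫ x in (0:ℝ)..1, g x := by
    rw [intervalIntegral.integral_of_le (by norm_num : (0:ℝ) ≤ 1)]
    exact setIntegral_congr_set Ico_ae_eq_Ioc
  rw [show (fun N => ∫ x, g x ∂(ghostApprox t N)) = fun N => ∫ x, g x ∂(ghostApprox t N) from rfl,
    htarget]
  -- the two convergent pieces
  have hR := aux_riemann g g.continuous
  have hE := aux_signed g g.continuous e heb hee heo
  have hlim := hR.add hE
  rw [add_zero] at hlim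
  refine Tendsto.congr' ?_ hlim
  filter_upwards [eventually_ge_atTop 1] with N hN
  obtain ⟨K, rfl⟩ : ∃ K, N = K + 1 := ⟨N - 1, by omega⟩
  rw [hint (K+1)]
  have hcast : (∑ n ∈ Finset.range (2 ^ (K+1)), (t (2 ^ (K+1) + n) : ENNReal))
      = ((2:ENNReal) ^ K) := by
    rw [← Nat.cast_sum, hSigma K]
    push_cast
    rfl
  have hcoef : ((∑ n ∈ Finset.range (2 ^ (K+1)), (t (2 ^ (K+1) + n) : ENNReal))⁻¹).toReal
      = ((2:ℝ) ^ K)⁻¹ := by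
    rw [hcast, ENNReal.toReal_inv]
    simp
  rw [hcoef]
  -- rewrite each coefficient
  have hco : ∀ n ∈ Finset.range (2 ^ (K+1)),
      (t (2 ^ (K+1) + n) : ℝ) * g ((n:ℝ) / 2 ^ (K+1))
        = (1/2) * ((1 + e n) * g ((n:ℝ) / 2 ^ (K+1))) := by
    intro n hn
    have h1 : (t (2 ^ (K+1) + n) : ℝ) = 1 - (t n : ℝ) := by
      rw [hshift _ _ (Finset.mem_range.1 hn)]
      push_cast [Nat.cast_sub (hle1 n)]
      ring
    rw [h1]
    simp only [he_def]
    ring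
  rw [Finset.sum_congr rfl hco, ← Finset.mul_sum]
  have hsplit : ∑ n ∈ Finset.range (2 ^ (K+1)), (1 + e n) * g ((n:ℝ) / 2 ^ (K+1))
      = (∑ n ∈ Finset.range (2 ^ (K+1)), g ((n:ℝ) / 2 ^ (K+1)))
        + ∑ n ∈ Finset.range (2 ^ (K+1)), e n * g ((n:ℝ) / 2 ^ (K+1)) := by
    rw [← Finset.sum_add_distrib]
    refine Finset.sum_congr rfl fun n _ => ?_
    ring
  rw [hsplit]
  have h2K : ((2:ℝ) ^ K)⁻¹ * (1/2) = ((2:ℝ) ^ (K+1))⁻¹ := by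
    rw [pow_succ]; field_simp
  rw [← h2K]
  ring
end
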